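/- arXiv:1306.6653 — 5 statements merged into one kernel-verified Lean document; each statement's English description precedes it below -/
import Mathlib

section
/- Let (X,S) be a measurable space, K a complex Hilbert space, and E : S → B(K) a positive-operator-valued measure. Let {f_n} be an increasing sequence of E-integrable functions f_n : X → [0,∞) converging pointwise to a measurable function f : X → [0,∞), and for each n let T_n ∈ B(K) be the positive operator with ⟪T_n k, k⟫ = ∫_X f_n dE_k for all k ∈ K. If there exists an operator B ∈ B(K) with T_n ⪯ B for all n, then f is E-integrable, there exists a positive operator T ∈ B(K) with ⟪Tk, k⟫ = ∫_X f dE_k for all k ∈ K, and T_n converges to T in the strong operator topology, i.e. ‖T_n k − Tk‖ → 0 for every k ∈ K. -/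
open MeasureTheory Filter Topology ZeroAtInfty ENNReal

noncomputable section

instance {H : Type*} [NormedAddCommGroup H] [InnerProductSpace ℂ H] [CompleteSpace H] :
    SMulMemClass (VonNeumannAlgebra H) ℂ (H →L[ℂ] H) where
  smul_mem {s} c a ha := s.toStarSubalgebra.smul_mem ha c

instance {H : Type*} [NormedAddCommGroup H] [InnerProductSpace ℂ H] [CompleteSpace H]
    (W : VonNeumannAlgebra H) : ContinuousStar ↥W :=
  ⟨continuous_induced_rng.2 (continuous_star.comp continuous_subtype_val)⟩

/-- A set function on a measurable space with values in `B(K)` is countably additive in the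
strong operator topology: for every `k` and every sequence of pairwise disjoint measurable
sets, the series of values applied to `k` sums to the value of the union applied to `k`. -/
def CountablyAdditiveSOT {X : Type*} [MeasurableSpace X] {K : Type*} [NormedAddCommGroup K]
    [InnerProductSpace ℂ K] (F : Set X → (K →L[ℂ] K)) : Prop :=
  ∀ Δ : ℕ → Set X, (∀ j, MeasurableSet (Δ j)) → Pairwise (Function.onFun Disjoint Δ) →
    ∀ k : K, HasSum (fun j => F (Δ j) k) (F (⋃ j, Δ j) k)

/-- A positive-operator-valued measure: positive values, countably additive in the SOT. -/
def IsPOVM {X : Type*} [MeasurableSpace X] {K : Type*} [NormedAddCommGroup K]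
    [InnerProductSpace ℂ K] [CompleteSpace K] (F : Set X → (K →L[ℂ] K)) : Prop :=
  (∀ Δ : Set X, MeasurableSet Δ → (F Δ).IsPositive) ∧ CountablyAdditiveSOT F

/-- A spectral measure: all values are hermitian projections and the set function is countably
additive in the strong operator topology. -/
def IsSpectralMeasure {X : Type*} [MeasurableSpace X] {K : Type*} [NormedAddCommGroup K]
    [InnerProductSpace ℂ K] [CompleteSpace K] (F : Set X → (K →L[ℂ] K)) : Prop :=
  (∀ Δ : Set X, MeasurableSet Δ → IsSelfAdjoint (F Δ) ∧ IsIdempotentElem (F Δ)) ∧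
    CountablyAdditiveSOT F

/-- A hermitian projection in a von Neumann algebra: a self-adjoint idempotent. -/
def IsHermProj {H : Type*} [NormedAddCommGroup H] [InnerProductSpace ℂ H] [CompleteSpace H]
    {W : VonNeumannAlgebra H} (P : ↥W) : Prop :=
  IsSelfAdjoint (P : H →L[ℂ] H) ∧ IsIdempotentElem (P : H →L[ℂ] H)

/-- A non-negative measure `m : S → B(W₁, W₂)`: for every positive `A ∈ W₁` the set function
`Δ ↦ m(Δ)(A)` is a positive-operator-valued measure. -/
def IsNonnegMeasure {X : Type*} [MeasurableSpace X] {H K : Type*}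
    [NormedAddCommGroup H] [InnerProductSpace ℂ H] [CompleteSpace H]
    [NormedAddCommGroup K] [InnerProductSpace ℂ K] [CompleteSpace K]
    {W₁ : VonNeumannAlgebra H} {W₂ : VonNeumannAlgebra K}
    (m : Set X → (↥W₁ →L[ℂ] ↥W₂)) : Prop :=
  ∀ A : ↥W₁, (A : H →L[ℂ] H).IsPositive → IsPOVM (fun Δ => ((m Δ A : K →L[ℂ] K)))

/-- A non-negative spectral measure: a non-negative measure such that `Δ ↦ M(Δ)(P)` is a
spectral measure for every hermitian projection `P ∈ W₁`, and
`M(Δ₁)(P) · M(Δ₂)(Q) = M(Δ₁ ∩ Δ₂)(PQ)` for all hermitian projections `P, Q`. -/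
def IsNonnegSpectralMeasure {X : Type*} [MeasurableSpace X] {H K : Type*}
    [NormedAddCommGroup H] [InnerProductSpace ℂ H] [CompleteSpace H]
    [NormedAddCommGroup K] [InnerProductSpace ℂ K] [CompleteSpace K]
    {W₁ : VonNeumannAlgebra H} {W₂ : VonNeumannAlgebra K}
    (M : Set X → (↥W₁ →L[ℂ] ↥W₂)) : Prop :=
  IsNonnegMeasure M ∧
  (∀ P : ↥W₁, IsHermProj P → IsSpectralMeasure (fun Δ => ((M Δ P : K →L[ℂ] K)))) ∧
  (∀ P Q : ↥W₁, IsHermProj P → IsHermProj Q → ∀ Δ₁ Δ₂ : Set X, MeasurableSet Δ₁ →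
    MeasurableSet Δ₂ → M Δ₁ P * M Δ₂ Q = M (Δ₁ ∩ Δ₂) (P * Q))

/-- `μ` is the (finite, nonnegative) scalar measure `Δ ↦ ⟪F(Δ)k, k⟫` associated to the
operator-valued set function `F` and the vector `k`. -/
def IsScalarMeasureOf {X : Type*} [MeasurableSpace X] {K : Type*} [NormedAddCommGroup K]
    [InnerProductSpace ℂ K] (μ : Measure X) (F : Set X → (K →L[ℂ] K)) (k : K) : Prop :=
  ∀ Δ : Set X, MeasurableSet Δ → μ Δ = ENNReal.ofReal (inner ℂ (F Δ k) k : ℂ).re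

section Helpers
set_option linter.unusedSectionVars false
variable {K : Type} [NormedAddCommGroup K] [InnerProductSpace ℂ K] [CompleteSpace K]

lemma my_sqrt_inner {A : K →L[ℂ] K} (hA : A.IsPositive) (x y : K) :
    (inner ℂ (A x) y : ℂ) = inner ℂ (CFC.sqrt A x) (CFC.sqrt A y) := by
  have h0 : (0 : K →L[ℂ] K) ≤ A := (ContinuousLinearMap.nonneg_iff_isPositive A).2 hA
  have hs : IsSelfAdjoint (CFC.sqrt A) := IsSelfAdjoint.of_nonneg (CFC.sqrt_nonneg A)
  conv_lhs => rw [← CFC.sqrt_mul_sqrt_self A h0]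
  rw [ContinuousLinearMap.mul_apply]
  nth_rewrite 1 [← hs.adjoint_eq]
  exact ContinuousLinearMap.adjoint_inner_left _ _ _

lemma my_sq_norm_le {A : K →L[ℂ] K} (hA : A.IsPositive) (x : K) :
    ‖A x‖ ^ 2 ≤ ‖A‖ * (inner ℂ (A x) x : ℂ).re := by
  have hre : ∀ z : K, ((inner ℂ z z : ℂ)).re = ‖z‖ ^ 2 := fun z => by
    rw [← inner_self_eq_norm_sq (𝕜 := ℂ) z]; rfl
  have h2 : ‖CFC.sqrt A x‖ ^ 2 = (inner ℂ (A x) x : ℂ).re := by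
    rw [my_sqrt_inner hA x x, hre]
  have h1 : ‖A x‖ ^ 2 ≤ ‖CFC.sqrt A x‖ * ‖CFC.sqrt A (A x)‖ := by
    calc ‖A x‖ ^ 2 = (inner ℂ (A x) (A x) : ℂ).re := (hre _).symm
      _ = (inner ℂ (CFC.sqrt A x) (CFC.sqrt A (A x)) : ℂ).re := by rw [my_sqrt_inner hA x (A x)]
      _ ≤ ‖(inner ℂ (CFC.sqrt A x) (CFC.sqrt A (A x)) : ℂ)‖ := Complex.re_le_norm _
      _ ≤ ‖CFC.sqrt A x‖ * ‖CFC.sqrt A (A x)‖ := norm_inner_le_norm _ _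
  have h3 : ‖CFC.sqrt A (A x)‖ ^ 2 ≤ ‖A‖ * ‖A x‖ ^ 2 := by
    calc ‖CFC.sqrt A (A x)‖ ^ 2 = (inner ℂ (A (A x)) (A x) : ℂ).re := by
          rw [my_sqrt_inner hA (A x) (A x), hre]
      _ ≤ ‖(inner ℂ (A (A x)) (A x) : ℂ)‖ := Complex.re_le_norm _
      _ ≤ ‖A (A x)‖ * ‖A x‖ := norm_inner_le_norm _ _
      _ ≤ (‖A‖ * ‖A x‖) * ‖A x‖ := by
          gcongr; exact A.le_opNorm _
      _ = ‖A‖ * ‖A x‖ ^ 2 := by ring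
  have hb : 0 ≤ (inner ℂ (A x) x : ℂ).re := by rw [← h2]; positivity
  rw [← h2]
  by_cases ha : ‖A x‖ = 0
  · simpa [ha] using mul_nonneg (norm_nonneg A) (sq_nonneg ‖CFC.sqrt A x‖)
  · have ha' : 0 < ‖A x‖ := lt_of_le_of_ne (norm_nonneg _) (Ne.symm ha)
    nlinarith [mul_le_mul h1 h1 (sq_nonneg ‖A x‖) (mul_nonneg (norm_nonneg _) (norm_nonneg _)),
      mul_le_mul_of_nonneg_left h3 (sq_nonneg ‖CFC.sqrt A x‖),
      mul_pos ha' ha', sq_nonneg ‖CFC.sqrt A x‖]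

lemma my_re_inner_le (A : K →L[ℂ] K) (x : K) : (inner ℂ (A x) x : ℂ).re ≤ ‖A‖ * ‖x‖ ^ 2 :=
  calc (inner ℂ (A x) x : ℂ).re ≤ ‖(inner ℂ (A x) x : ℂ)‖ := Complex.re_le_norm _
    _ ≤ ‖A x‖ * ‖x‖ := norm_inner_le_norm _ _
    _ ≤ (‖A‖ * ‖x‖) * ‖x‖ := by gcongr; exact A.le_opNorm _
    _ = ‖A‖ * ‖x‖ ^ 2 := by ring

end Helpers

/-- **monotone convergence for POVM integrals.** If `fₙ` is an increasing
sequence of nonnegative `E`-integrable functions converging pointwise to `f`, `Tₙ` are the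
associated positive operators (`⟪Tₙk, k⟫ = ∫ fₙ dE_k`) and `Tₙ ⪯ B` for all `n`, then `f` is
`E`-integrable, there is a positive operator `T` with `⟪Tk, k⟫ = ∫ f dE_k`, and `Tₙ → T` in
the strong operator topology. -/
theorem statement7 {X : Type} [MeasurableSpace X] {K : Type}
    [NormedAddCommGroup K] [InnerProductSpace ℂ K] [CompleteSpace K]
    (E : Set X → (K →L[ℂ] K)) (hE : IsPOVM E)
    (μ : K → Measure X) (hμ : ∀ k : K, IsScalarMeasureOf (μ k) E k)
    (f : ℕ → X → ℝ) (g : X → ℝ)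
    (hf0 : ∀ n x, 0 ≤ f n x)
    (hfmeas : ∀ n, Measurable (f n)) (hgmeas : Measurable g)
    (hmono : ∀ n x, f n x ≤ f (n + 1) x)
    (hlim : ∀ x, Filter.Tendsto (fun n => f n x) Filter.atTop (nhds (g x)))
    (hfint : ∀ n, ∃ c : ℝ, ∀ k : K,
      (∫⁻ x, ENNReal.ofReal (f n x) ∂(μ k)) ≤ ENNReal.ofReal (c * ‖k‖ ^ 2))
    (T : ℕ → (K →L[ℂ] K))
    (hTpos : ∀ n, (T n).IsPositive)
    (hT : ∀ n, ∀ k : K,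
      (inner ℂ (T n k) k : ℂ) = (((∫⁻ x, ENNReal.ofReal (f n x) ∂(μ k)).toReal : ℝ) : ℂ))
    (B : K →L[ℂ] K) (hB : ∀ n, (B - T n).IsPositive) :
    (∃ c : ℝ, ∀ k : K,
      (∫⁻ x, ENNReal.ofReal (g x) ∂(μ k)) ≤ ENNReal.ofReal (c * ‖k‖ ^ 2)) ∧
    ∃ S : K →L[ℂ] K, S.IsPositive ∧
      (∀ k : K,
        (inner ℂ (S k) k : ℂ) = (((∫⁻ x, ENNReal.ofReal (g x) ∂(μ k)).toReal : ℝ) : ℂ)) ∧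
      (∀ k : K, Filter.Tendsto (fun n => ‖T n k - S k‖) Filter.atTop (nhds 0)) := by
  classical
  have hfin : ∀ n (k : K), (∫⁻ x, ENNReal.ofReal (f n x) ∂(μ k)) ≠ ⊤ := by
    intro n k
    obtain ⟨c, hc⟩ := hfint n
    exact ((hc k).trans_lt ENNReal.ofReal_lt_top).ne
  have hre : ∀ n (k : K), (inner ℂ (T n k) k : ℂ).re
      = (∫⁻ x, ENNReal.ofReal (f n x) ∂(μ k)).toReal := by
    intro n k; rw [hT n k]; exact Complex.ofReal_re _
  have hImono : ∀ (k : K), Monotone (fun n => ∫⁻ x, ENNReal.ofReal (f n x) ∂(μ k)) := by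
    intro k
    exact monotone_nat_of_le_succ fun n =>
      lintegral_mono fun x => ENNReal.ofReal_le_ofReal (hmono n x)
  have hIg : ∀ k : K, (∫⁻ x, ENNReal.ofReal (g x) ∂(μ k))
      = ⨆ n, ∫⁻ x, ENNReal.ofReal (f n x) ∂(μ k) := by
    intro k
    have hpt : ∀ x, ENNReal.ofReal (g x) = ⨆ n, ENNReal.ofReal (f n x) := by
      intro x
      refine tendsto_nhds_unique ((ENNReal.continuous_ofReal.tendsto _).comp (hlim x)) ?_
      exact tendsto_atTop_iSup
        (monotone_nat_of_le_succ fun n => ENNReal.ofReal_le_ofReal (hmono n x))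
    calc (∫⁻ x, ENNReal.ofReal (g x) ∂(μ k))
        = ∫⁻ x, ⨆ n, ENNReal.ofReal (f n x) ∂(μ k) := lintegral_congr hpt
      _ = ⨆ n, ∫⁻ x, ENNReal.ofReal (f n x) ∂(μ k) :=
          lintegral_iSup (fun n => (hfmeas n).ennreal_ofReal)
            (fun n m h x => ENNReal.ofReal_le_ofReal
              ((monotone_nat_of_le_succ fun j => hmono j x) h))
  have hIB : ∀ n (k : K), (∫⁻ x, ENNReal.ofReal (f n x) ∂(μ k))
      ≤ ENNReal.ofReal ((inner ℂ (B k) k : ℂ).re) := by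
    intro n k
    have h2 := (hB n).re_inner_nonneg_left k
    simp only [ContinuousLinearMap.sub_apply, inner_sub_left, RCLike.re_to_complex,
      Complex.sub_re] at h2
    rw [← ENNReal.ofReal_toReal (hfin n k)]
    refine ENNReal.ofReal_le_ofReal ?_
    rw [← hre n k]; linarith
  have hgbound : ∀ k : K, (∫⁻ x, ENNReal.ofReal (g x) ∂(μ k))
      ≤ ENNReal.ofReal (‖B‖ * ‖k‖ ^ 2) := by
    intro k
    rw [hIg k]
    exact iSup_le fun n => (hIB n k).trans (ENNReal.ofReal_le_ofReal (my_re_inner_le B k))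
  have hgfin : ∀ k : K, (∫⁻ x, ENNReal.ofReal (g x) ∂(μ k)) ≠ ⊤ :=
    fun k => ((hgbound k).trans_lt ENNReal.ofReal_lt_top).ne
  have hItend : ∀ k : K, Tendsto (fun n => (∫⁻ x, ENNReal.ofReal (f n x) ∂(μ k)).toReal)
      atTop (𝓝 (∫⁻ x, ENNReal.ofReal (g x) ∂(μ k)).toReal) := by
    intro k
    have h1 : Tendsto (fun n => ∫⁻ x, ENNReal.ofReal (f n x) ∂(μ k)) atTop
        (𝓝 (∫⁻ x, ENNReal.ofReal (g x) ∂(μ k))) := by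
      rw [hIg k]; exact tendsto_atTop_iSup (hImono k)
    exact (ENNReal.tendsto_toReal (hgfin k)).comp h1
  have hTnorm : ∀ n, ‖T n‖ ≤ ‖B‖ := fun n =>
    CStarAlgebra.norm_le_norm_of_nonneg_of_le
      ((ContinuousLinearMap.nonneg_iff_isPositive _).2 (hTpos n))
      ((ContinuousLinearMap.le_def _ _).2 (hB n))
  have hrdiff : ∀ m n (k : K), n ≤ m → (inner ℂ ((T m - T n) k) k : ℂ).re
      = (∫⁻ x, ENNReal.ofReal (f m x) ∂(μ k)).toReal
        - (∫⁻ x, ENNReal.ofReal (f n x) ∂(μ k)).toReal := by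
    intro m n k _
    simp only [ContinuousLinearMap.sub_apply, inner_sub_left, Complex.sub_re]
    rw [hre, hre]
  have hrmono : ∀ m n (k : K), n ≤ m →
      (∫⁻ x, ENNReal.ofReal (f n x) ∂(μ k)).toReal
        ≤ (∫⁻ x, ENNReal.ofReal (f m x) ∂(μ k)).toReal := fun m n k h =>
    ENNReal.toReal_mono (hfin m k) (hImono k h)
  have hTsub : ∀ m n, n ≤ m → (T m - T n).IsPositive := by
    intro m n h
    refine ⟨(((hTpos m).isSelfAdjoint).sub (hTpos n).isSelfAdjoint).isSymmetric, fun k => ?_⟩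
    have h0 : ContinuousLinearMap.reApplyInnerSelf (T m - T n) k
        = (inner ℂ ((T m - T n) k) k : ℂ).re := rfl
    rw [h0, hrdiff m n k h]
    linarith [hrmono m n k h]
  have hkey : ∀ m n (k : K), n ≤ m → ‖T m k - T n k‖ ^ 2 ≤
      (2 * ‖B‖) * ((∫⁻ x, ENNReal.ofReal (f m x) ∂(μ k)).toReal
        - (∫⁻ x, ENNReal.ofReal (f n x) ∂(μ k)).toReal) := by
    intro m n k h
    have h1 := my_sq_norm_le (hTsub m n h) k
    have h2 : ‖T m - T n‖ ≤ 2 * ‖B‖ := by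
      calc ‖T m - T n‖ ≤ ‖T m‖ + ‖T n‖ := norm_sub_le _ _
        _ ≤ ‖B‖ + ‖B‖ := add_le_add (hTnorm m) (hTnorm n)
        _ = 2 * ‖B‖ := by ring
    have h4 : 0 ≤ (inner ℂ ((T m - T n) k) k : ℂ).re := by
      rw [hrdiff m n k h]; linarith [hrmono m n k h]
    calc ‖T m k - T n k‖ ^ 2 = ‖(T m - T n) k‖ ^ 2 := by
          rw [ContinuousLinearMap.sub_apply]
      _ ≤ ‖T m - T n‖ * (inner ℂ ((T m - T n) k) k : ℂ).re := h1
      _ ≤ (2 * ‖B‖) * (inner ℂ ((T m - T n) k) k : ℂ).re :=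
          mul_le_mul_of_nonneg_right h2 h4
      _ = _ := by rw [hrdiff m n k h]
  have hcauchy : ∀ k : K, CauchySeq (fun n => T n k) := by
    intro k
    rw [Metric.cauchySeq_iff]
    intro ε hε
    obtain ⟨N, hN⟩ := Metric.cauchySeq_iff.1 (hItend k).cauchySeq
      (ε ^ 2 / (2 * ‖B‖ + 1)) (by positivity)
    refine ⟨N, fun m hm n hn => ?_⟩
    wlog h : n ≤ m generalizing m n
    · rw [dist_comm]; exact this n hn m hm (le_of_not_ge h)
    have hk := hkey m n k h
    have hd := hN m hm n hn
    rw [Real.dist_eq] at hd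
    have habs : (∫⁻ x, ENNReal.ofReal (f m x) ∂(μ k)).toReal
        - (∫⁻ x, ENNReal.ofReal (f n x) ∂(μ k)).toReal < ε ^ 2 / (2 * ‖B‖ + 1) :=
      lt_of_le_of_lt (le_abs_self _) hd
    have hnn := hrmono m n k h
    have hsq : ‖T m k - T n k‖ ^ 2 < ε ^ 2 := by
      have h2B : (0:ℝ) ≤ 2 * ‖B‖ := by positivity
      have hlt : (2 * ‖B‖ + 1) * ((∫⁻ x, ENNReal.ofReal (f m x) ∂(μ k)).toReal
          - (∫⁻ x, ENNReal.ofReal (f n x) ∂(μ k)).toReal)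
          < (2 * ‖B‖ + 1) * (ε ^ 2 / (2 * ‖B‖ + 1)) :=
        mul_lt_mul_of_pos_left habs (by positivity)
      have heq : (2 * ‖B‖ + 1) * (ε ^ 2 / (2 * ‖B‖ + 1)) = ε ^ 2 := by
        field_simp
      nlinarith
    rw [dist_eq_norm]
    nlinarith [norm_nonneg (T m k - T n k)]
  choose S0 hS0 using fun k => cauchySeq_tendsto_of_complete (hcauchy k)
  have hadd : ∀ x y : K, S0 (x + y) = S0 x + S0 y := by
    intro x y
    refine tendsto_nhds_unique (hS0 (x + y)) ?_
    simpa [map_add] using (hS0 x).add (hS0 y)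
  have hsmul : ∀ (c : ℂ) (x : K), S0 (c • x) = c • S0 x := by
    intro c x
    refine tendsto_nhds_unique (hS0 (c • x)) ?_
    simpa [_root_.map_smul] using (hS0 x).const_smul c
  have hSbound : ∀ x : K, ‖S0 x‖ ≤ ‖B‖ * ‖x‖ := by
    intro x
    refine le_of_tendsto (hS0 x).norm (Filter.Eventually.of_forall fun n => ?_)
    calc ‖T n x‖ ≤ ‖T n‖ * ‖x‖ := (T n).le_opNorm x
      _ ≤ ‖B‖ * ‖x‖ := mul_le_mul_of_nonneg_right (hTnorm n) (norm_nonneg x)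
  let Slin : K →ₗ[ℂ] K :=
    { toFun := S0, map_add' := hadd, map_smul' := hsmul }
  let S : K →L[ℂ] K := LinearMap.mkContinuous Slin ‖B‖ hSbound
  have hSapp : ∀ x, S x = S0 x := fun x => rfl
  have hinner : ∀ k : K, (inner ℂ (S k) k : ℂ)
      = (((∫⁻ x, ENNReal.ofReal (g x) ∂(μ k)).toReal : ℝ) : ℂ) := by
    intro k
    have h1 : Tendsto (fun n => (inner ℂ (T n k) k : ℂ)) atTop (𝓝 (inner ℂ (S k) k : ℂ)) := by
      rw [hSapp]
      exact Filter.Tendsto.inner (hS0 k) tendsto_const_nhds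
    have h2 : Tendsto (fun n => (inner ℂ (T n k) k : ℂ)) atTop
        (𝓝 (((∫⁻ x, ENNReal.ofReal (g x) ∂(μ k)).toReal : ℝ) : ℂ)) := by
      simp only [hT]
      exact (Complex.continuous_ofReal.tendsto _).comp (hItend k)
    exact tendsto_nhds_unique h1 h2
  have hSpos : S.IsPositive := by
    refine ⟨?_, fun k => ?_⟩
    · intro x y
      have h1 : Tendsto (fun n => (inner ℂ (T n x) y : ℂ)) atTop (𝓝 (inner ℂ (S x) y)) := by
        rw [hSapp]
        exact Filter.Tendsto.inner (hS0 x) tendsto_const_nhds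
      have h2 : Tendsto (fun n => (inner ℂ (T n x) y : ℂ)) atTop (𝓝 (inner ℂ x (S y))) := by
        have h3 : ∀ n, (inner ℂ (T n x) y : ℂ) = inner ℂ x (T n y) := fun n =>
          (hTpos n).1 x y
        rw [hSapp]
        simp only [h3]
        exact Filter.Tendsto.inner tendsto_const_nhds (hS0 y)
      exact tendsto_nhds_unique h1 h2
    · have h0 : ContinuousLinearMap.reApplyInnerSelf S k = (inner ℂ (S k) k : ℂ).re := rfl
      rw [h0, hinner k, Complex.ofReal_re]
      exact ENNReal.toReal_nonneg
  refine ⟨⟨‖B‖, hgbound⟩, S, hSpos, hinner, fun k => ?_⟩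
  exact tendsto_iff_norm_sub_tendsto_zero.1 (hSapp k ▸ hS0 k)
end
end

section
/- Let (X,S) be a measurable space, H and K complex Hilbert spaces, W₁ ⊆ B(H) and W₂ ⊆ B(K) von Neumann algebras, and m : S → B(W₁,W₂) a non-negative measure. Let f₁,…,f_n, g₁,…,g_m : X → [0,∞) be measurable functions and B₁,…,B_n, C₁,…,C_m ∈ W₁ positive operators such that each fᵢ is integrable with respect to m_{Bᵢ} (i.e. there is a constant Kᵢ with ∫_X fᵢ dμ_{Bᵢ,k} ≤ Kᵢ‖k‖² for all k ∈ K) and each gⱼ is integrable with respect to m_{Cⱼ}. If Σᵢ₌₁ⁿ fᵢ(x)Bᵢ − Σⱼ₌₁ᵐ gⱼ(x)Cⱼ is a positive operator for every x ∈ X, then for every k ∈ K, Σᵢ₌₁ⁿ ∫_X fᵢ dμ_{Bᵢ,k} ≥ Σⱼ₌₁ᵐ ∫_X gⱼ dμ_{Cⱼ,k}. -/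
open MeasureTheory Filter Topology ZeroAtInfty ENNReal

noncomputable section
set_option maxHeartbeats 1000000

/-- Let `m` be a non-negative measure, `fᵢ, gⱼ ≥ 0` measurable functions and
`Bᵢ, Cⱼ ∈ W₁` positive operators, with each `fᵢ` integrable w.r.t. `m_{Bᵢ}` and each `gⱼ`
integrable w.r.t. `m_{Cⱼ}`.  If `Σᵢ fᵢ(x)Bᵢ − Σⱼ gⱼ(x)Cⱼ` is positive for every `x`, then
`Σᵢ ∫ fᵢ dμ_{Bᵢ,k} ≥ Σⱼ ∫ gⱼ dμ_{Cⱼ,k}` for every `k ∈ K`. -/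
theorem statement10 {X : Type} [MeasurableSpace X] {H K : Type}
    [NormedAddCommGroup H] [InnerProductSpace ℂ H] [CompleteSpace H]
    [NormedAddCommGroup K] [InnerProductSpace ℂ K] [CompleteSpace K]
    {W₁ : VonNeumannAlgebra H} {W₂ : VonNeumannAlgebra K}
    (m : Set X → (↥W₁ →L[ℂ] ↥W₂)) (hm : IsNonnegMeasure m)
    (μ : ↥W₁ → K → Measure X)
    (hμ : ∀ A : ↥W₁, (A : H →L[ℂ] H).IsPositive → ∀ k : K,
      IsScalarMeasureOf (μ A k) (fun Δ => ((m Δ A : K →L[ℂ] K))) k)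
    (n M : ℕ) (f : Fin n → X → ℝ) (g : Fin M → X → ℝ)
    (B : Fin n → ↥W₁) (C : Fin M → ↥W₁)
    (hf0 : ∀ i x, 0 ≤ f i x) (hg0 : ∀ j x, 0 ≤ g j x)
    (hfmeas : ∀ i, Measurable (f i)) (hgmeas : ∀ j, Measurable (g j))
    (hBpos : ∀ i, ((B i : H →L[ℂ] H)).IsPositive)
    (hCpos : ∀ j, ((C j : H →L[ℂ] H)).IsPositive)
    (hfint : ∀ i, ∃ c : ℝ, ∀ k : K,
      (∫⁻ x, ENNReal.ofReal (f i x) ∂(μ (B i) k)) ≤ ENNReal.ofReal (c * ‖k‖ ^ 2))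
    (hgint : ∀ j, ∃ c : ℝ, ∀ k : K,
      (∫⁻ x, ENNReal.ofReal (g j x) ∂(μ (C j) k)) ≤ ENNReal.ofReal (c * ‖k‖ ^ 2))
    (hpos : ∀ x : X,
      ((∑ i, f i x • ((B i : H →L[ℂ] H))) - ∑ j, g j x • ((C j : H →L[ℂ] H))).IsPositive) :
    ∀ k : K,
      (∑ j, (∫⁻ x, ENNReal.ofReal (g j x) ∂(μ (C j) k)).toReal) ≤
      (∑ i, (∫⁻ x, ENNReal.ofReal (f i x) ∂(μ (B i) k)).toReal) := by
  intro k
  -- scalar measure values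
  have hμBval : ∀ i (Δ : Set X), MeasurableSet Δ →
      μ (B i) k Δ = ENNReal.ofReal (inner ℂ (((m Δ (B i) : ↥W₂) : K →L[ℂ] K) k) k : ℂ).re :=
    fun i Δ hΔ => hμ (B i) (hBpos i) k Δ hΔ
  have hμCval : ∀ j (Δ : Set X), MeasurableSet Δ →
      μ (C j) k Δ = ENNReal.ofReal (inner ℂ (((m Δ (C j) : ↥W₂) : K →L[ℂ] K) k) k : ℂ).re :=
    fun j Δ hΔ => hμ (C j) (hCpos j) k Δ hΔ
  have hBre : ∀ i (Δ : Set X), MeasurableSet Δ →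
      0 ≤ (inner ℂ (((m Δ (B i) : ↥W₂) : K →L[ℂ] K) k) k : ℂ).re :=
    fun i Δ hΔ => (Complex.nonneg_iff.mp (((hm (B i) (hBpos i)).1 Δ hΔ).inner_nonneg_left k)).1
  have hCre : ∀ j (Δ : Set X), MeasurableSet Δ →
      0 ≤ (inner ℂ (((m Δ (C j) : ↥W₂) : K →L[ℂ] K) k) k : ℂ).re :=
    fun j Δ hΔ => (Complex.nonneg_iff.mp (((hm (C j) (hCpos j)).1 Δ hΔ).inner_nonneg_left k)).1
  -- the key pointwise inequality
  have key : ∀ (Δ : Set X), MeasurableSet Δ → ∀ x₀ : X,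
      (∑ j, ENNReal.ofReal (g j x₀) * μ (C j) k Δ) ≤
        ∑ i, ENNReal.ofReal (f i x₀) * μ (B i) k Δ := by
    intro Δ hΔ x₀
    set A : ↥W₁ := (∑ i, (f i x₀ : ℂ) • B i) - ∑ j, (g j x₀ : ℂ) • C j with hAdef
    have hAcoe : ((A : ↥W₁) : H →L[ℂ] H) =
        (∑ i, f i x₀ • ((B i : H →L[ℂ] H))) - ∑ j, g j x₀ • ((C j : H →L[ℂ] H)) := by
      rw [hAdef]
      simp only [AddSubgroupClass.coe_sub, AddSubmonoidClass.coe_finset_sum,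
        SetLike.val_smul]
      simp only [Complex.coe_smul]
    have hApos : (A : H →L[ℂ] H).IsPositive := by rw [hAcoe]; exact hpos x₀
    have h0 : 0 ≤ (inner ℂ (((m Δ A : ↥W₂) : K →L[ℂ] K) k) k : ℂ).re :=
      (Complex.nonneg_iff.mp (((hm A hApos).1 Δ hΔ).inner_nonneg_left k)).1
    have hexp : (inner ℂ (((m Δ A : ↥W₂) : K →L[ℂ] K) k) k : ℂ).re
        = ∑ i, f i x₀ * (inner ℂ (((m Δ (B i) : ↥W₂) : K →L[ℂ] K) k) k : ℂ).re
          - ∑ j, g j x₀ * (inner ℂ (((m Δ (C j) : ↥W₂) : K →L[ℂ] K) k) k : ℂ).re := by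
      rw [hAdef, map_sub, map_sum, map_sum]
      simp only [_root_.map_smul]
      simp only [AddSubgroupClass.coe_sub, AddSubmonoidClass.coe_finset_sum, SetLike.val_smul]
      simp only [ContinuousLinearMap.sub_apply, ContinuousLinearMap.sum_apply,
        ContinuousLinearMap.smul_apply, inner_sub_left, sum_inner, inner_smul_left,
        Complex.sub_re, Complex.re_sum, Complex.conj_ofReal, Complex.mul_re,
        Complex.ofReal_re, Complex.ofReal_im, zero_mul, sub_zero]
    have hreal : (∑ j, g j x₀ * (inner ℂ (((m Δ (C j) : ↥W₂) : K →L[ℂ] K) k) k : ℂ).re)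
        ≤ ∑ i, f i x₀ * (inner ℂ (((m Δ (B i) : ↥W₂) : K →L[ℂ] K) k) k : ℂ).re := by
      rw [hexp] at h0; linarith
    calc (∑ j, ENNReal.ofReal (g j x₀) * μ (C j) k Δ)
        = ENNReal.ofReal (∑ j, g j x₀ *
            (inner ℂ (((m Δ (C j) : ↥W₂) : K →L[ℂ] K) k) k : ℂ).re) := by
          rw [ENNReal.ofReal_sum_of_nonneg
            (fun j _ => mul_nonneg (hg0 j x₀) (hCre j Δ hΔ))]
          exact Finset.sum_congr rfl fun j _ => by
            rw [hμCval j Δ hΔ, ← ENNReal.ofReal_mul (hg0 j x₀)]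
      _ ≤ ENNReal.ofReal (∑ i, f i x₀ *
            (inner ℂ (((m Δ (B i) : ↥W₂) : K →L[ℂ] K) k) k : ℂ).re) :=
          ENNReal.ofReal_le_ofReal hreal
      _ = ∑ i, ENNReal.ofReal (f i x₀) * μ (B i) k Δ := by
          rw [ENNReal.ofReal_sum_of_nonneg
            (fun i _ => mul_nonneg (hf0 i x₀) (hBre i Δ hΔ))]
          exact Finset.sum_congr rfl fun i _ => by
            rw [hμBval i Δ hΔ, ← ENNReal.ofReal_mul (hf0 i x₀)]
  -- notation
  set S₁ : ℝ≥0∞ := ∑ i, ∫⁻ x, ENNReal.ofReal (f i x) ∂(μ (B i) k) with hS₁def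
  set S₂ : ℝ≥0∞ := ∑ j, ∫⁻ x, ENNReal.ofReal (g j x) ∂(μ (C j) k) with hS₂def
  set total : ℝ≥0∞ := (∑ i, μ (B i) k Set.univ) + ∑ j, μ (C j) k Set.univ with htotaldef
  have htot_ne : total ≠ ∞ := by
    rw [htotaldef]
    refine ENNReal.add_ne_top.2 ⟨?_, ?_⟩
    · exact (ENNReal.sum_lt_top.2 fun i _ => by
        rw [hμBval i Set.univ MeasurableSet.univ]; exact ENNReal.ofReal_lt_top).ne
    · exact (ENNReal.sum_lt_top.2 fun j _ => by
        rw [hμCval j Set.univ MeasurableSet.univ]; exact ENNReal.ofReal_lt_top).ne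
  have hIf_ne : ∀ i, (∫⁻ x, ENNReal.ofReal (f i x) ∂(μ (B i) k)) ≠ ∞ := fun i => by
    obtain ⟨c, hc⟩ := hfint i
    exact ((hc k).trans_lt ENNReal.ofReal_lt_top).ne
  have hIg_ne : ∀ j, (∫⁻ x, ENNReal.ofReal (g j x) ∂(μ (C j) k)) ≠ ∞ := fun j => by
    obtain ⟨c, hc⟩ := hgint j
    exact ((hc k).trans_lt ENNReal.ofReal_lt_top).ne
  have hS₁_ne : S₁ ≠ ∞ := (ENNReal.sum_lt_top.2 fun i _ => (hIf_ne i).lt_top).ne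
  have hS₂_ne : S₂ ≠ ∞ := (ENNReal.sum_lt_top.2 fun j _ => (hIg_ne j).lt_top).ne
  -- main estimate for every δ > 0
  have main : ∀ δ : ℝ, 0 < δ → S₂ ≤ S₁ + ENNReal.ofReal δ * total := by
    intro δ hδ
    -- floor comparison
    have hfl : ∀ a b : ℝ, ⌊a / δ⌋ = ⌊b / δ⌋ → a ≤ b + δ := by
      intro a b h
      have h1 : a / δ < ⌊a / δ⌋ + 1 := Int.lt_floor_add_one _
      have h2 : (⌊b / δ⌋ : ℝ) ≤ b / δ := Int.floor_le _
      rw [h] at h1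
      have h3 : a / δ < b / δ + 1 := by linarith
      have h4 := mul_lt_mul_of_pos_right h3 hδ
      rw [div_mul_cancel₀ _ hδ.ne', add_mul, div_mul_cancel₀ _ hδ.ne', one_mul] at h4
      linarith
    -- the countable partition
    set φ : X → (Fin n → ℤ) × (Fin M → ℤ) :=
      fun x => (fun i => ⌊f i x / δ⌋, fun j => ⌊g j x / δ⌋) with hφdef
    have hφ : Measurable φ := Measurable.prodMk
      (measurable_pi_lambda _ fun i => ((hfmeas i).div_const δ).floor)
      (measurable_pi_lambda _ fun j => ((hgmeas j).div_const δ).floor)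
    set Δ : (Fin n → ℤ) × (Fin M → ℤ) → Set X := fun t => φ ⁻¹' {t} with hΔdef
    have hΔmeas : ∀ t, MeasurableSet (Δ t) := fun t => hφ (MeasurableSet.singleton t)
    have hΔdisj : Pairwise (Function.onFun Disjoint Δ) := by
      intro t t' htt'
      refine Set.disjoint_left.2 fun x hx hx' => htt' ?_
      rw [← hx, ← hx']
    have hΔunion : (⋃ t, Δ t) = Set.univ :=
      Set.iUnion_eq_univ_iff.2 fun x => ⟨φ x, rfl⟩
    -- decomposing lintegrals over the partition
    have hdecomp : ∀ (ν : Measure X) (F : X → ℝ≥0∞),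
        (∫⁻ x, F x ∂ν) = ∑' t, ∫⁻ x in Δ t, F x ∂ν := by
      intro ν F
      rw [← lintegral_iUnion hΔmeas hΔdisj, hΔunion, setLIntegral_univ]
    have hmeasdecomp : ∀ ν : Measure X, ν Set.univ = ∑' t, ν (Δ t) := by
      intro ν
      rw [← measure_iUnion hΔdisj hΔmeas, hΔunion]
    -- per-piece estimate
    have per_t : ∀ t, (∑ j, ∫⁻ x in Δ t, ENNReal.ofReal (g j x) ∂(μ (C j) k))
        ≤ (∑ i, ∫⁻ x in Δ t, ENNReal.ofReal (f i x) ∂(μ (B i) k))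
          + ENNReal.ofReal δ * ((∑ i, μ (B i) k (Δ t)) + ∑ j, μ (C j) k (Δ t)) := by
      intro t
      rcases (Δ t).eq_empty_or_nonempty with he | ⟨x₀, hx₀⟩
      · simp [he]
      · have hfeq : ∀ x ∈ Δ t, ∀ i, ⌊f i x / δ⌋ = ⌊f i x₀ / δ⌋ := by
          intro x hx i
          have : φ x = φ x₀ := by rw [hx, hx₀]
          exact congrFun (congrArg Prod.fst this) i
        have hgeq : ∀ x ∈ Δ t, ∀ j, ⌊g j x / δ⌋ = ⌊g j x₀ / δ⌋ := by
          intro x hx j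
          have : φ x = φ x₀ := by rw [hx, hx₀]
          exact congrFun (congrArg Prod.snd this) j
        have hgb : ∀ j, (∫⁻ x in Δ t, ENNReal.ofReal (g j x) ∂(μ (C j) k))
            ≤ ENNReal.ofReal (g j x₀) * μ (C j) k (Δ t)
              + ENNReal.ofReal δ * μ (C j) k (Δ t) := by
          intro j
          calc (∫⁻ x in Δ t, ENNReal.ofReal (g j x) ∂(μ (C j) k))
              ≤ ∫⁻ _ in Δ t, ENNReal.ofReal (g j x₀ + δ) ∂(μ (C j) k) :=
                setLIntegral_mono measurable_const fun x hx =>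
                  ENNReal.ofReal_le_ofReal (hfl _ _ (hgeq x hx j))
            _ = ENNReal.ofReal (g j x₀ + δ) * μ (C j) k (Δ t) := setLIntegral_const _ _
            _ = ENNReal.ofReal (g j x₀) * μ (C j) k (Δ t)
                + ENNReal.ofReal δ * μ (C j) k (Δ t) := by
                rw [ENNReal.ofReal_add (hg0 j x₀) hδ.le, add_mul]
        have hfb : ∀ i, ENNReal.ofReal (f i x₀) * μ (B i) k (Δ t)
            ≤ (∫⁻ x in Δ t, ENNReal.ofReal (f i x) ∂(μ (B i) k))
              + ENNReal.ofReal δ * μ (B i) k (Δ t) := by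
          intro i
          calc ENNReal.ofReal (f i x₀) * μ (B i) k (Δ t)
              = ∫⁻ _ in Δ t, ENNReal.ofReal (f i x₀) ∂(μ (B i) k) :=
                (setLIntegral_const _ _).symm
            _ ≤ ∫⁻ x in Δ t, (ENNReal.ofReal (f i x) + ENNReal.ofReal δ) ∂(μ (B i) k) := by
                refine setLIntegral_mono ((hfmeas i).ennreal_ofReal.add measurable_const)
                  fun x hx => ?_
                rw [← ENNReal.ofReal_add (hf0 i x) hδ.le]
                exact ENNReal.ofReal_le_ofReal (hfl _ _ ((hfeq x hx i).symm))
            _ = (∫⁻ x in Δ t, ENNReal.ofReal (f i x) ∂(μ (B i) k))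
                + ENNReal.ofReal δ * μ (B i) k (Δ t) := by
                rw [lintegral_add_right _ measurable_const, setLIntegral_const]
        calc (∑ j, ∫⁻ x in Δ t, ENNReal.ofReal (g j x) ∂(μ (C j) k))
            ≤ ∑ j, (ENNReal.ofReal (g j x₀) * μ (C j) k (Δ t)
              + ENNReal.ofReal δ * μ (C j) k (Δ t)) :=
              Finset.sum_le_sum fun j _ => hgb j
          _ = (∑ j, ENNReal.ofReal (g j x₀) * μ (C j) k (Δ t))
              + ENNReal.ofReal δ * ∑ j, μ (C j) k (Δ t) := by
              rw [Finset.sum_add_distrib, Finset.mul_sum]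
          _ ≤ (∑ i, ENNReal.ofReal (f i x₀) * μ (B i) k (Δ t))
              + ENNReal.ofReal δ * ∑ j, μ (C j) k (Δ t) :=
              add_le_add (key (Δ t) (hΔmeas t) x₀) le_rfl
          _ ≤ ((∑ i, ∫⁻ x in Δ t, ENNReal.ofReal (f i x) ∂(μ (B i) k))
              + ENNReal.ofReal δ * ∑ i, μ (B i) k (Δ t))
              + ENNReal.ofReal δ * ∑ j, μ (C j) k (Δ t) := by
              refine add_le_add ?_ le_rfl
              calc (∑ i, ENNReal.ofReal (f i x₀) * μ (B i) k (Δ t))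
                  ≤ ∑ i, ((∫⁻ x in Δ t, ENNReal.ofReal (f i x) ∂(μ (B i) k))
                    + ENNReal.ofReal δ * μ (B i) k (Δ t)) :=
                    Finset.sum_le_sum fun i _ => hfb i
                _ = _ := by rw [Finset.sum_add_distrib, Finset.mul_sum]
          _ = (∑ i, ∫⁻ x in Δ t, ENNReal.ofReal (f i x) ∂(μ (B i) k))
              + ENNReal.ofReal δ * ((∑ i, μ (B i) k (Δ t)) + ∑ j, μ (C j) k (Δ t)) := by
              rw [mul_add, add_assoc]
    -- sum over the partition
    calc S₂ = ∑' t, ∑ j, ∫⁻ x in Δ t, ENNReal.ofReal (g j x) ∂(μ (C j) k) := by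
          rw [hS₂def]
          rw [Finset.sum_congr rfl fun j _ => hdecomp (μ (C j) k) fun x => ENNReal.ofReal (g j x)]
          exact (Summable.tsum_finsetSum fun j _ => ENNReal.summable).symm
      _ ≤ ∑' t, ((∑ i, ∫⁻ x in Δ t, ENNReal.ofReal (f i x) ∂(μ (B i) k))
            + ENNReal.ofReal δ * ((∑ i, μ (B i) k (Δ t)) + ∑ j, μ (C j) k (Δ t))) :=
          ENNReal.tsum_le_tsum per_t
      _ = S₁ + ENNReal.ofReal δ * total := by
          rw [ENNReal.tsum_add, ENNReal.tsum_mul_left, ENNReal.tsum_add]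
          congr 1
          · rw [hS₁def, Summable.tsum_finsetSum fun i _ => ENNReal.summable]
            exact Finset.sum_congr rfl fun i _ =>
              (hdecomp (μ (B i) k) fun x => ENNReal.ofReal (f i x)).symm
          · congr 1
            rw [htotaldef]
            congr 1
            · rw [Summable.tsum_finsetSum fun i _ => ENNReal.summable]
              exact Finset.sum_congr rfl fun i _ => (hmeasdecomp (μ (B i) k)).symm
            · rw [Summable.tsum_finsetSum fun j _ => ENNReal.summable]
              exact Finset.sum_congr rfl fun j _ => (hmeasdecomp (μ (C j) k)).symm
  -- conclude S₂ ≤ S₁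
  have hS : S₂ ≤ S₁ := by
    refine ENNReal.le_of_forall_pos_le_add fun ε hε _ => ?_
    set δ : ℝ := (ε : ℝ) / (total.toReal + 1) with hδdef
    have htotnn : (0:ℝ) ≤ total.toReal := ENNReal.toReal_nonneg
    have hδ : 0 < δ := div_pos (by exact_mod_cast hε) (by linarith)
    refine (main δ hδ).trans (add_le_add le_rfl ?_)
    calc ENNReal.ofReal δ * total
        = ENNReal.ofReal δ * ENNReal.ofReal total.toReal := by
          rw [ENNReal.ofReal_toReal htot_ne]
      _ = ENNReal.ofReal (δ * total.toReal) := (ENNReal.ofReal_mul hδ.le).symm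
      _ ≤ ENNReal.ofReal (ε : ℝ) := by
          refine ENNReal.ofReal_le_ofReal ?_
          rw [hδdef, div_mul_eq_mul_div, div_le_iff₀ (by linarith)]
          have hε' : (0:ℝ) ≤ (ε : ℝ) := ε.coe_nonneg
          nlinarith
      _ = (ε : ℝ≥0∞) := ENNReal.ofReal_coe_nnreal
  -- back to real numbers
  calc (∑ j, (∫⁻ x, ENNReal.ofReal (g j x) ∂(μ (C j) k)).toReal)
      = S₂.toReal := by
        rw [hS₂def, ENNReal.toReal_sum fun j _ => hIg_ne j]
    _ ≤ S₁.toReal := ENNReal.toReal_mono hS₁_ne hS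
    _ = ∑ i, (∫⁻ x, ENNReal.ofReal (f i x) ∂(μ (B i) k)).toReal := by
        rw [hS₁def, ENNReal.toReal_sum fun i _ => hIf_ne i]
end
end

section
/- Let (X,S) be a measurable space, H and K complex Hilbert spaces, W₁ ⊆ B(H) and W₂ ⊆ B(K) von Neumann algebras, and m : S → B(W₁,W₂) a non-negative measure. Then for every finite collection of pairwise disjoint sets Δ₁,…,Δ_n ∈ S with X = ∪ⱼ₌₁ⁿ Δⱼ and every choice of operators A₁,…,A_n ∈ W₁ with ‖Aⱼ‖ ≤ 1 for all j, one has ‖Σⱼ₌₁ⁿ m(Δⱼ)(Aⱼ)‖ ≤ 4‖m(X)(1_{W₁})‖, where 1_{W₁} is the identity operator on H; in particular m has finite semivariation. -/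
open MeasureTheory Filter Topology ZeroAtInfty ENNReal

noncomputable section

section Aux

variable {X : Type} [MeasurableSpace X] {K : Type} [NormedAddCommGroup K]
  [InnerProductSpace ℂ K] [CompleteSpace K]

lemma aux_empty_eq_zero (F : Set X → (K →L[ℂ] K)) (hF : CountablyAdditiveSOT F) :
    F ∅ = 0 := by
  ext k
  have h := hF (fun _ => ∅) (fun _ => MeasurableSet.empty)
    (fun i j _ => disjoint_bot_left) k
  simp only [Set.iUnion_empty] at h
  have h0 : Tendsto (fun _ : ℕ => F ∅ k) cofinite (nhds 0) :=
    h.summable.tendsto_cofinite_zero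
  have h1 : Tendsto (fun _ : ℕ => F ∅ k) cofinite (nhds (F ∅ k)) := tendsto_const_nhds
  simpa using tendsto_nhds_unique h1 h0

lemma aux_finite_additivity (F : Set X → (K →L[ℂ] K)) (hF : CountablyAdditiveSOT F)
    (n : ℕ) (Δ : Fin n → Set X) (hmeas : ∀ j, MeasurableSet (Δ j))
    (hdisj : Pairwise (Function.onFun Disjoint Δ)) :
    ∑ j, F (Δ j) = F (⋃ j, Δ j) := by
  ext k
  set Δ' : ℕ → Set X := fun i => if h : i < n then Δ ⟨i, h⟩ else ∅ with hΔ'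
  have hmeas' : ∀ i, MeasurableSet (Δ' i) := by
    intro i; by_cases h : i < n <;> simp [hΔ', h, hmeas]
  have hdisj' : Pairwise (Function.onFun Disjoint Δ') := by
    intro i j hij
    unfold Function.onFun
    by_cases hi : i < n
    · by_cases hj : j < n
      · simp only [hΔ', dif_pos hi, dif_pos hj]
        exact hdisj (fun h => hij (by simpa using congrArg Fin.val h))
      · simp [hΔ', dif_neg hj]
    · simp [hΔ', dif_neg hi]
  have hsum := hF Δ' hmeas' hdisj' k
  have hunion : (⋃ i, Δ' i) = ⋃ j, Δ j := by
    ext x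
    simp only [Set.mem_iUnion]
    constructor
    · rintro ⟨i, hx⟩
      by_cases h : i < n
      · exact ⟨⟨i, h⟩, by simpa [hΔ', dif_pos h] using hx⟩
      · simp [hΔ', dif_neg h] at hx
    · rintro ⟨j, hx⟩
      exact ⟨(j : ℕ), by simpa [hΔ', dif_pos j.isLt] using hx⟩
  rw [hunion] at hsum
  have hzero : ∀ i ∉ Finset.range n, F (Δ' i) k = 0 := by
    intro i hi
    rw [Finset.mem_range] at hi
    simp [hΔ', dif_neg hi, aux_empty_eq_zero F hF]
  have hsum2 : HasSum (fun i => F (Δ' i) k) (∑ i ∈ Finset.range n, F (Δ' i) k) :=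
    hasSum_sum_of_ne_finset_zero hzero
  have heq : ∑ i ∈ Finset.range n, F (Δ' i) k = ∑ j : Fin n, F (Δ j) k := by
    rw [← Fin.sum_univ_eq_sum_range (fun i => F (Δ' i) k) n]
    refine Finset.sum_congr rfl fun j _ => ?_
    simp [hΔ', dif_pos j.isLt]
  rw [ContinuousLinearMap.sum_apply]
  rw [← hsum2.unique hsum, heq]

lemma aux_half_one_add_isPositive {S : K →L[ℂ] K} (hS : IsSelfAdjoint S) (hn : ‖S‖ ≤ 1) :
    ((2⁻¹ : ℂ) • (1 + S)).IsPositive := by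
  constructor
  · rw [← ContinuousLinearMap.isSelfAdjoint_iff_isSymmetric, IsSelfAdjoint, star_smul, star_add, star_one, hS.star_eq]
    norm_num
  · intro x
    have hb : |Complex.re (inner ℂ (S x) x : ℂ)| ≤ ‖x‖ ^ 2 := by
      calc |Complex.re (inner ℂ (S x) x : ℂ)| ≤ ‖(inner ℂ (S x) x : ℂ)‖ :=
            Complex.abs_re_le_norm _
        _ ≤ ‖S x‖ * ‖x‖ := norm_inner_le_norm _ _
        _ ≤ (‖S‖ * ‖x‖) * ‖x‖ := by gcongr; exact S.le_opNorm x
        _ ≤ (1 * ‖x‖) * ‖x‖ := by gcongr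
        _ = ‖x‖ ^ 2 := by ring
    have hre : ((2⁻¹ : ℂ) • (1 + S)).reApplyInnerSelf x
        = 2⁻¹ * (‖x‖ ^ 2 + Complex.re (inner ℂ (S x) x : ℂ)) := by
      simp [ContinuousLinearMap.reApplyInnerSelf_apply, ContinuousLinearMap.smul_apply,
        ContinuousLinearMap.add_apply, ContinuousLinearMap.one_apply, inner_smul_left,
        inner_add_left, inner_self_eq_norm_sq_to_K, Complex.mul_re, Complex.add_re,
        ← Complex.ofReal_pow, Complex.ofReal_re]
      ring
    rw [hre]
    have h1 : 0 ≤ ‖x‖ ^ 2 + Complex.re (inner ℂ (S x) x : ℂ) := by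
      have := neg_abs_le (Complex.re (inner ℂ (S x) x : ℂ))
      linarith
    linarith

lemma aux_key {X : Type} [MeasurableSpace X] {H K : Type}
    [NormedAddCommGroup H] [InnerProductSpace ℂ H] [CompleteSpace H]
    [NormedAddCommGroup K] [InnerProductSpace ℂ K] [CompleteSpace K]
    {W₁ : VonNeumannAlgebra H} {W₂ : VonNeumannAlgebra K}
    (m : Set X → (↥W₁ →L[ℂ] ↥W₂)) (hm : IsNonnegMeasure m)
    (n : ℕ) (Δ : Fin n → Set X) (hmeas : ∀ j, MeasurableSet (Δ j))
    (hdisj : Pairwise (Function.onFun Disjoint Δ)) (huniv : (⋃ j, Δ j) = Set.univ)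
    (P : Fin n → ↥W₁) (hP : ∀ j, ((P j : H →L[ℂ] H)).IsPositive)
    (hP1 : ∀ j, (((1 - P j : ↥W₁) : H →L[ℂ] H)).IsPositive) :
    ‖∑ j, ((m (Δ j) (P j) : K →L[ℂ] K))‖ ≤ ‖((m Set.univ (1 : ↥W₁) : K →L[ℂ] K))‖ := by
  have h1pos : ((1 : ↥W₁) : H →L[ℂ] H).IsPositive := ContinuousLinearMap.isPositive_one
  have hCA := (hm 1 h1pos).2
  have hadd := aux_finite_additivity (fun Δ => ((m Δ (1 : ↥W₁) : K →L[ℂ] K))) hCA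
    n Δ hmeas hdisj
  rw [huniv] at hadd
  have hge : (0 : K →L[ℂ] K) ≤ ∑ j, ((m (Δ j) (P j) : K →L[ℂ] K)) := by
    refine Finset.sum_nonneg fun j _ => ?_
    rw [ContinuousLinearMap.nonneg_iff_isPositive]
    exact (hm (P j) (hP j)).1 (Δ j) (hmeas j)
  have hle : ∑ j, ((m (Δ j) (P j) : K →L[ℂ] K))
      ≤ ((m Set.univ (1 : ↥W₁) : K →L[ℂ] K)) := by
    have hadd' : ∑ j, ((m (Δ j) (1 : ↥W₁) : K →L[ℂ] K))
        = ((m Set.univ (1 : ↥W₁) : K →L[ℂ] K)) := hadd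
    rw [← hadd']
    refine Finset.sum_le_sum fun j _ => ?_
    rw [ContinuousLinearMap.le_def]
    have hpos : ((m (Δ j) (1 - P j) : K →L[ℂ] K)).IsPositive :=
      (hm (1 - P j) (hP1 j)).1 (Δ j) (hmeas j)
    have heq : ((m (Δ j) (1 - P j) : K →L[ℂ] K))
        = ((m (Δ j) (1 : ↥W₁) : K →L[ℂ] K)) - ((m (Δ j) (P j) : K →L[ℂ] K)) := by
      rw [map_sub]; rfl
    rwa [heq] at hpos
  exact CStarAlgebra.norm_le_norm_of_nonneg_of_le hge hle

end Aux

set_option maxHeartbeats 1000000 in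
/-- A non-negative measure `m` satisfies
`‖Σⱼ m(Δⱼ)(Aⱼ)‖ ≤ 4 ‖m(X)(1)‖` for every finite measurable partition `Δ₁, …, Δ_n` of `X` and
operators `Aⱼ ∈ W₁` of norm at most `1`; in particular `m` has finite semivariation. -/
theorem statement11 {X : Type} [MeasurableSpace X] {H K : Type}
    [NormedAddCommGroup H] [InnerProductSpace ℂ H] [CompleteSpace H]
    [NormedAddCommGroup K] [InnerProductSpace ℂ K] [CompleteSpace K]
    {W₁ : VonNeumannAlgebra H} {W₂ : VonNeumannAlgebra K}
    (m : Set X → (↥W₁ →L[ℂ] ↥W₂)) (hm : IsNonnegMeasure m) :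
    (∀ (n : ℕ) (Δ : Fin n → Set X), (∀ j, MeasurableSet (Δ j)) →
      Pairwise (Function.onFun Disjoint Δ) → (⋃ j, Δ j) = Set.univ →
      ∀ A : Fin n → ↥W₁, (∀ j, ‖(A j : H →L[ℂ] H)‖ ≤ 1) →
        ‖∑ j, ((m (Δ j) (A j) : K →L[ℂ] K))‖ ≤
          4 * ‖((m Set.univ (1 : ↥W₁) : K →L[ℂ] K))‖) ∧
    ∃ c : ℝ, ∀ (n : ℕ) (Δ : Fin n → Set X), (∀ j, MeasurableSet (Δ j)) →
      Pairwise (Function.onFun Disjoint Δ) → (⋃ j, Δ j) = Set.univ →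
      ∀ A : Fin n → ↥W₁, (∀ j, ‖(A j : H →L[ℂ] H)‖ ≤ 1) →
        ‖∑ j, ((m (Δ j) (A j) : K →L[ℂ] K))‖ ≤ c := by
  have main : ∀ (n : ℕ) (Δ : Fin n → Set X), (∀ j, MeasurableSet (Δ j)) →
      Pairwise (Function.onFun Disjoint Δ) → (⋃ j, Δ j) = Set.univ →
      ∀ A : Fin n → ↥W₁, (∀ j, ‖(A j : H →L[ℂ] H)‖ ≤ 1) →
        ‖∑ j, ((m (Δ j) (A j) : K →L[ℂ] K))‖ ≤
          4 * ‖((m Set.univ (1 : ↥W₁) : K →L[ℂ] K))‖ := by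
    intro n Δ hmeas hdisj huniv A hA
    -- real and imaginary parts
    set B : Fin n → ↥W₁ := fun j => (2⁻¹ : ℂ) • (A j + star (A j)) with hB
    set C : Fin n → ↥W₁ := fun j => (-Complex.I * 2⁻¹) • (A j - star (A j)) with hC
    set Bp : Fin n → ↥W₁ := fun j => (2⁻¹ : ℂ) • (1 + B j) with hBp
    set Bm : Fin n → ↥W₁ := fun j => (2⁻¹ : ℂ) • (1 - B j) with hBm
    set Cp : Fin n → ↥W₁ := fun j => (2⁻¹ : ℂ) • (1 + C j) with hCp
    set Cm : Fin n → ↥W₁ := fun j => (2⁻¹ : ℂ) • (1 - C j) with hCm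
    -- self-adjointness and norm bounds for B and C
    have hBsa : ∀ j, IsSelfAdjoint ((B j : H →L[ℂ] H)) := by
      intro j
      show IsSelfAdjoint ((2⁻¹ : ℂ) • ((A j : H →L[ℂ] H) + star (A j : H →L[ℂ] H)))
      rw [IsSelfAdjoint, star_smul, star_add, star_star]
      simp [add_comm]
    have hCsa : ∀ j, IsSelfAdjoint ((C j : H →L[ℂ] H)) := by
      intro j
      show IsSelfAdjoint ((-Complex.I * 2⁻¹) • ((A j : H →L[ℂ] H) - star (A j : H →L[ℂ] H)))
      rw [IsSelfAdjoint, star_smul, star_sub, star_star]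
      rw [show star (-Complex.I * 2⁻¹) = Complex.I * 2⁻¹ by simp]
      match_scalars <;> ring
    have hBn : ∀ j, ‖(B j : H →L[ℂ] H)‖ ≤ 1 := by
      intro j
      show ‖(2⁻¹ : ℂ) • ((A j : H →L[ℂ] H) + star (A j : H →L[ℂ] H))‖ ≤ 1
      rw [norm_smul]
      have h1 : ‖(A j : H →L[ℂ] H) + star (A j : H →L[ℂ] H)‖ ≤ 2 := by
        calc ‖(A j : H →L[ℂ] H) + star (A j : H →L[ℂ] H)‖
            ≤ ‖(A j : H →L[ℂ] H)‖ + ‖star (A j : H →L[ℂ] H)‖ := norm_add_le _ _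
          _ ≤ 1 + 1 := by rw [norm_star]; exact add_le_add (hA j) (hA j)
          _ = 2 := by norm_num
      calc ‖(2⁻¹ : ℂ)‖ * ‖(A j : H →L[ℂ] H) + star (A j : H →L[ℂ] H)‖
          ≤ ‖(2⁻¹ : ℂ)‖ * 2 := by gcongr
        _ = 1 := by norm_num
    have hCn : ∀ j, ‖(C j : H →L[ℂ] H)‖ ≤ 1 := by
      intro j
      show ‖(-Complex.I * 2⁻¹) • ((A j : H →L[ℂ] H) - star (A j : H →L[ℂ] H))‖ ≤ 1
      rw [norm_smul]
      have h1 : ‖(A j : H →L[ℂ] H) - star (A j : H →L[ℂ] H)‖ ≤ 2 := by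
        calc ‖(A j : H →L[ℂ] H) - star (A j : H →L[ℂ] H)‖
            ≤ ‖(A j : H →L[ℂ] H)‖ + ‖star (A j : H →L[ℂ] H)‖ := norm_sub_le _ _
          _ ≤ 1 + 1 := by rw [norm_star]; exact add_le_add (hA j) (hA j)
          _ = 2 := by norm_num
      have h2 : ‖(-Complex.I * 2⁻¹ : ℂ)‖ = 2⁻¹ := by
        simp [norm_mul]
      calc ‖(-Complex.I * 2⁻¹ : ℂ)‖ * ‖(A j : H →L[ℂ] H) - star (A j : H →L[ℂ] H)‖
          ≤ ‖(-Complex.I * 2⁻¹ : ℂ)‖ * 2 := by gcongr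
        _ = 1 := by rw [h2]; norm_num
    -- positivity of the four parts
    have hBp_pos : ∀ j, ((Bp j : H →L[ℂ] H)).IsPositive := fun j =>
      aux_half_one_add_isPositive (hBsa j) (hBn j)
    have hBm_pos : ∀ j, ((Bm j : H →L[ℂ] H)).IsPositive := by
      intro j
      have := aux_half_one_add_isPositive (K := H) (S := -(B j : H →L[ℂ] H))
        ((hBsa j).neg) (by rw [norm_neg]; exact hBn j)
      have heq : (2⁻¹ : ℂ) • (1 + -(B j : H →L[ℂ] H)) = ((Bm j : H →L[ℂ] H)) := by
        show _ = (2⁻¹ : ℂ) • ((1 : H →L[ℂ] H) - (B j : H →L[ℂ] H))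
        rw [sub_eq_add_neg]
      rwa [heq] at this
    have hCp_pos : ∀ j, ((Cp j : H →L[ℂ] H)).IsPositive := fun j =>
      aux_half_one_add_isPositive (hCsa j) (hCn j)
    have hCm_pos : ∀ j, ((Cm j : H →L[ℂ] H)).IsPositive := by
      intro j
      have := aux_half_one_add_isPositive (K := H) (S := -(C j : H →L[ℂ] H))
        ((hCsa j).neg) (by rw [norm_neg]; exact hCn j)
      have heq : (2⁻¹ : ℂ) • (1 + -(C j : H →L[ℂ] H)) = ((Cm j : H →L[ℂ] H)) := by
        show _ = (2⁻¹ : ℂ) • ((1 : H →L[ℂ] H) - (C j : H →L[ℂ] H))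
        rw [sub_eq_add_neg]
      rwa [heq] at this
    -- complements
    have hBp_compl : ∀ j, (1 : ↥W₁) - Bp j = Bm j := by
      intro j; rw [hBp, hBm]; module
    have hBm_compl : ∀ j, (1 : ↥W₁) - Bm j = Bp j := by
      intro j; rw [hBp, hBm]; module
    have hCp_compl : ∀ j, (1 : ↥W₁) - Cp j = Cm j := by
      intro j; rw [hCp, hCm]; module
    have hCm_compl : ∀ j, (1 : ↥W₁) - Cm j = Cp j := by
      intro j; rw [hCp, hCm]; module
    -- the four key bounds
    set N := ‖((m Set.univ (1 : ↥W₁) : K →L[ℂ] K))‖ with hN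
    have k1 := aux_key m hm n Δ hmeas hdisj huniv Bp hBp_pos
      (fun j => by rw [hBp_compl j]; exact hBm_pos j)
    have k2 := aux_key m hm n Δ hmeas hdisj huniv Bm hBm_pos
      (fun j => by rw [hBm_compl j]; exact hBp_pos j)
    have k3 := aux_key m hm n Δ hmeas hdisj huniv Cp hCp_pos
      (fun j => by rw [hCp_compl j]; exact hCm_pos j)
    have k4 := aux_key m hm n Δ hmeas hdisj huniv Cm hCm_pos
      (fun j => by rw [hCm_compl j]; exact hCp_pos j)
    -- decomposition of A j
    have hAdecomp : ∀ j, A j = Bp j - Bm j + Complex.I • Cp j - Complex.I • Cm j := by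
      intro j
      rw [hBp, hBm, hCp, hCm, hB, hC]
      match_scalars
      all_goals try ring
      all_goals try linear_combination (2⁻¹ : ℂ) * Complex.I_sq
      all_goals linear_combination (-2⁻¹ : ℂ) * Complex.I_sq
    have hterm : ∀ j, ((m (Δ j) (A j) : K →L[ℂ] K))
        = ((m (Δ j) (Bp j) : K →L[ℂ] K)) - ((m (Δ j) (Bm j) : K →L[ℂ] K))
          + Complex.I • ((m (Δ j) (Cp j) : K →L[ℂ] K))
          - Complex.I • ((m (Δ j) (Cm j) : K →L[ℂ] K)) := by
      intro j
      conv_lhs => rw [hAdecomp j]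
      rw [map_sub, map_add, map_sub, _root_.map_smul (m (Δ j)) Complex.I (Cp j),
        _root_.map_smul (m (Δ j)) Complex.I (Cm j)]
      simp only [AddSubgroupClass.coe_sub, AddMemClass.coe_add, SetLike.val_smul]
    rw [Finset.sum_congr rfl (fun j _ => hterm j)]
    rw [Finset.sum_sub_distrib, Finset.sum_add_distrib, Finset.sum_sub_distrib,
      ← Finset.smul_sum, ← Finset.smul_sum]
    set S1 := ∑ j, ((m (Δ j) (Bp j) : K →L[ℂ] K))
    set S2 := ∑ j, ((m (Δ j) (Bm j) : K →L[ℂ] K))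
    set S3 := ∑ j, ((m (Δ j) (Cp j) : K →L[ℂ] K))
    set S4 := ∑ j, ((m (Δ j) (Cm j) : K →L[ℂ] K))
    have hI : ∀ T : K →L[ℂ] K, ‖Complex.I • T‖ = ‖T‖ := fun T => by
      rw [norm_smul, Complex.norm_I, one_mul]
    calc ‖S1 - S2 + Complex.I • S3 - Complex.I • S4‖
        ≤ ‖S1 - S2 + Complex.I • S3‖ + ‖Complex.I • S4‖ := norm_sub_le _ _
      _ ≤ ‖S1 - S2‖ + ‖Complex.I • S3‖ + ‖Complex.I • S4‖ := by
          gcongr; exact norm_add_le _ _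
      _ ≤ ‖S1‖ + ‖S2‖ + ‖Complex.I • S3‖ + ‖Complex.I • S4‖ := by
          gcongr; exact norm_sub_le _ _
      _ = ‖S1‖ + ‖S2‖ + ‖S3‖ + ‖S4‖ := by rw [hI, hI]
      _ ≤ N + N + N + N := by gcongr
      _ = 4 * N := by ring
  exact ⟨main, ⟨4 * ‖((m Set.univ (1 : ↥W₁) : K →L[ℂ] K))‖, main⟩⟩
end
end

section
/- Let X be a compact Hausdorff space with its Borel σ-algebra, H and K complex Hilbert spaces, W₁ ⊆ B(H) and W₂ ⊆ B(K) von Neumann algebras, and ρ : C(X,W₁) → W₂ a unital ⋆-algebra homomorphism. Suppose that for every hermitian projection P ∈ W₁ there is given a spectral measure F_P : Borel(X) → W₂ such that each finite Borel measure ν_{P,k}(Δ) := ⟪F_P(Δ)k, k⟫ (k ∈ K) is regular and ⟪ρ(f•P)k, k⟫ = ∫_X f dν_{P,k} for all f ∈ C(X,ℝ) with f ≥ 0 and all k ∈ K. Then whenever Σᵢ₌₁ⁿ λᵢPᵢ = Σⱼ₌₁ᵐ μⱼQⱼ with λᵢ,μⱼ ∈ ℝ and Pᵢ,Qⱼ hermitian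 projections in W₁, one has Σᵢ₌₁ⁿ λᵢF_{Pᵢ}(Δ) = Σⱼ₌₁ᵐ μⱼF_{Qⱼ}(Δ) for every Borel set Δ ⊆ X. -/
open MeasureTheory Filter Topology ZeroAtInfty ENNReal

noncomputable section

/-- For `f ∈ C(X, ℝ)` and `P ∈ W`, the element `f • P : x ↦ f(x) P` of `C(X, W)`. -/
def cmSmul {X : Type*} [TopologicalSpace X] {H : Type*} [NormedAddCommGroup H]
    [InnerProductSpace ℂ H] [CompleteSpace H] {W : VonNeumannAlgebra H}
    (f : C(X, ℝ)) (P : ↥W) : C(X, ↥W) :=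
  ⟨fun x => (f x : ℂ) • P, by fun_prop⟩


section Aux

lemma integrable_cont {X : Type} [TopologicalSpace X] [CompactSpace X]
    [MeasurableSpace X] [BorelSpace X] (μ : Measure X) [IsFiniteMeasure μ] (f : C(X, ℝ)) :
    Integrable f μ :=
  f.continuous.integrable_of_hasCompactSupport (HasCompactSupport.of_compactSpace _)

lemma combo_le {X : Type} [TopologicalSpace X] [CompactSpace X] [T2Space X]
    [MeasurableSpace X] [BorelSpace X] {ι κ : Type} [Fintype ι] [Fintype κ]
    (a : ι → ℝ) (b : κ → ℝ) (ν : ι → Measure X) (ρ : κ → Measure X)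
    (ha : ∀ l, 0 ≤ a l) (hb : ∀ l, 0 ≤ b l)
    (hνf : ∀ l, IsFiniteMeasure (ν l)) (hρf : ∀ l, IsFiniteMeasure (ρ l))
    (hνr : ∀ l, (ν l).Regular) (hρr : ∀ l, (ρ l).Regular)
    (hint : ∀ f : C(X, ℝ), (∀ x, 0 ≤ f x) →
      (∑ l, a l * ∫ x, f x ∂(ν l)) ≤ ∑ l, b l * ∫ x, f x ∂(ρ l))
    {Δ : Set X} (hΔ : MeasurableSet Δ) :
    (∑ l, a l * ((ν l) Δ).toReal) ≤ ∑ l, b l * ((ρ l) Δ).toReal := by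
  haveI := hνf; haveI := hρf
  set S : Set X → ℝ := fun A => ∑ l, a l * ((ν l) A).toReal with hS
  set T : Set X → ℝ := fun A => ∑ l, b l * ((ρ l) A).toReal with hT
  have hSmono : ∀ A B : Set X, A ⊆ B → S A ≤ S B := by
    intro A B hAB
    refine Finset.sum_le_sum fun l _ => mul_le_mul_of_nonneg_left ?_ (ha l)
    exact ENNReal.toReal_mono (measure_ne_top _ _) (measure_mono hAB)
  -- compact ⊆ open comparison via Urysohn
  have hCU : ∀ C U : Set X, IsCompact C → IsOpen U → C ⊆ U → S C ≤ T U := by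
    intro C U hC hU hCU
    have hdis : Disjoint C Uᶜ := Set.disjoint_left.mpr fun x hx hxc => hxc (hCU hx)
    obtain ⟨f, hf0, hf1, hf01⟩ :=
      exists_continuous_zero_one_of_isCompact hC hU.isClosed_compl hdis
    set g : C(X, ℝ) := 1 - f with hg
    have hg0 : ∀ x, 0 ≤ g x := by
      intro x
      simp only [hg, ContinuousMap.sub_apply, ContinuousMap.one_apply]
      linarith [(hf01 x).2]
    have step1 : S C ≤ ∑ l, a l * ∫ x, g x ∂(ν l) := by
      refine Finset.sum_le_sum fun l _ => mul_le_mul_of_nonneg_left ?_ (ha l)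
      rw [← measureReal_def, ← integral_indicator_one hC.measurableSet]
      refine integral_mono ((integrable_const (1 : ℝ)).indicator hC.measurableSet)
        (integrable_cont _ g) fun x => ?_
      by_cases hx : x ∈ C
      · simp only [Set.indicator_of_mem hx, Pi.one_apply, hg, ContinuousMap.sub_apply,
          ContinuousMap.one_apply, hf0 hx]
        simp
      · simpa [Set.indicator_of_notMem hx] using hg0 x
    have step2 : (∑ l, b l * ∫ x, g x ∂(ρ l)) ≤ T U := by
      refine Finset.sum_le_sum fun l _ => mul_le_mul_of_nonneg_left ?_ (hb l)
      rw [← measureReal_def, ← integral_indicator_one hU.measurableSet]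
      refine integral_mono (integrable_cont _ g)
        ((integrable_const (1 : ℝ)).indicator hU.measurableSet) fun x => ?_
      by_cases hx : x ∈ U
      · simp only [Set.indicator_of_mem hx, Pi.one_apply, hg, ContinuousMap.sub_apply,
          ContinuousMap.one_apply]
        linarith [(hf01 x).1]
      · have : f x = 1 := hf1 hx
        simp [Set.indicator_of_notMem hx, hg, this]
    exact step1.trans ((hint g hg0).trans step2)
  -- outer approximation for T
  have houter : ∀ A : Set X, ∀ ε : ℝ, 0 < ε →
      ∃ U : Set X, IsOpen U ∧ A ⊆ U ∧ T U ≤ T A + ε := by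
    intro A ε hε
    set B : ℝ := ∑ l, b l with hB
    have hB0 : 0 ≤ B := Finset.sum_nonneg fun l _ => hb l
    set δ : ℝ := ε / (B + 1) with hδ
    have hδ0 : 0 < δ := div_pos hε (by linarith)
    have hchoice : ∀ l : κ, ∃ U : Set X, A ⊆ U ∧ IsOpen U ∧
        (ρ l) U < (ρ l) A + ENNReal.ofReal δ := by
      intro l
      haveI := hρr l
      exact Set.exists_isOpen_lt_add A (measure_ne_top _ _) (ENNReal.ofReal_pos.2 hδ0).ne'
    choose Us hAU hUo hltU using hchoice
    refine ⟨⋂ l, Us l, isOpen_iInter_of_finite hUo, Set.subset_iInter hAU, ?_⟩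
    have key : ∀ l : κ, ((ρ l) (⋂ l', Us l')).toReal ≤ ((ρ l) A).toReal + δ := by
      intro l
      have h1 : (ρ l) (⋂ l', Us l') ≤ (ρ l) A + ENNReal.ofReal δ :=
        (measure_mono (Set.iInter_subset _ l)).trans (hltU l).le
      have h2 : ((ρ l) A + ENNReal.ofReal δ).toReal = ((ρ l) A).toReal + δ := by
        rw [ENNReal.toReal_add (measure_ne_top _ _) ENNReal.ofReal_ne_top,
          ENNReal.toReal_ofReal hδ0.le]
      calc ((ρ l) (⋂ l', Us l')).toReal
          ≤ ((ρ l) A + ENNReal.ofReal δ).toReal := ENNReal.toReal_mono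
            (by simp [ENNReal.add_ne_top, measure_ne_top]) h1
        _ = ((ρ l) A).toReal + δ := h2
    have hle : T (⋂ l', Us l') ≤ ∑ l, b l * (((ρ l) A).toReal + δ) :=
      Finset.sum_le_sum fun l _ => mul_le_mul_of_nonneg_left (key l) (hb l)
    refine hle.trans ?_
    have expand : ∑ l, b l * (((ρ l) A).toReal + δ) = T A + B * δ := by
      simp only [mul_add, Finset.sum_add_distrib, ← Finset.sum_mul, hT, hB]
    rw [expand]
    have : B * δ ≤ ε := by
      rw [hδ]
      calc B * (ε / (B + 1)) ≤ (B + 1) * (ε / (B + 1)) := by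
            apply mul_le_mul_of_nonneg_right (by linarith) (le_of_lt hδ0)
        _ = ε := by field_simp
    linarith
  -- inner approximation for S on open sets
  have hinner : ∀ U : Set X, IsOpen U → ∀ ε : ℝ, 0 < ε →
      ∃ C : Set X, IsCompact C ∧ C ⊆ U ∧ S U ≤ S C + ε := by
    intro U hU ε hε
    set B : ℝ := ∑ l, a l with hB
    have hB0 : 0 ≤ B := Finset.sum_nonneg fun l _ => ha l
    set δ : ℝ := ε / (B + 1) with hδ
    have hδ0 : 0 < δ := div_pos hε (by linarith)
    have hchoice : ∀ l : ι, ∃ C, C ⊆ U ∧ IsCompact C ∧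
        (ν l) U < (ν l) C + ENNReal.ofReal δ := by
      intro l
      haveI := hνr l
      obtain ⟨C, hCU', hCc, hlt⟩ := hU.measurableSet.exists_isCompact_lt_add
        (μ := ν l) (measure_ne_top _ _) (ENNReal.ofReal_pos.2 hδ0).ne'
      exact ⟨C, hCU', hCc, hlt⟩
    choose Cs hCU' hCc hltC using hchoice
    refine ⟨⋃ l, Cs l, isCompact_iUnion hCc, Set.iUnion_subset hCU', ?_⟩
    have key : ∀ l : ι, ((ν l) U).toReal ≤ ((ν l) (⋃ l', Cs l')).toReal + δ := by
      intro l
      have h1 : (ν l) U ≤ (ν l) (⋃ l', Cs l') + ENNReal.ofReal δ :=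
        (hltC l).le.trans (add_le_add (measure_mono (Set.subset_iUnion _ l)) le_rfl)
      calc ((ν l) U).toReal ≤ ((ν l) (⋃ l', Cs l') + ENNReal.ofReal δ).toReal :=
            ENNReal.toReal_mono (by simp [ENNReal.add_ne_top, measure_ne_top]) h1
        _ = ((ν l) (⋃ l', Cs l')).toReal + δ := by
            rw [ENNReal.toReal_add (measure_ne_top _ _) ENNReal.ofReal_ne_top,
              ENNReal.toReal_ofReal hδ0.le]
    have hle : S U ≤ ∑ l, a l * (((ν l) (⋃ l', Cs l')).toReal + δ) :=
      Finset.sum_le_sum fun l _ => mul_le_mul_of_nonneg_left (key l) (ha l)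
    refine hle.trans ?_
    have expand : ∑ l, a l * (((ν l) (⋃ l', Cs l')).toReal + δ)
        = S (⋃ l', Cs l') + B * δ := by
      simp only [mul_add, Finset.sum_add_distrib, ← Finset.sum_mul, hS, hB]
    rw [expand]
    have : B * δ ≤ ε := by
      rw [hδ]
      calc B * (ε / (B + 1)) ≤ (B + 1) * (ε / (B + 1)) := by
            apply mul_le_mul_of_nonneg_right (by linarith) (le_of_lt hδ0)
        _ = ε := by field_simp
    linarith
  -- conclude
  show S Δ ≤ T Δ
  refine le_of_forall_pos_le_add fun ε hε => ?_
  obtain ⟨U, hUo, hΔU, hTU⟩ := houter Δ (ε / 2) (by linarith)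
  obtain ⟨C, hCc, hCsub, hSU⟩ := hinner U hUo (ε / 2) (by linarith)
  have h1 : S Δ ≤ S U := hSmono _ _ hΔU
  have h2 : S C ≤ T U := hCU C U hCc hUo hCsub
  linarith

variable {X : Type} [MeasurableSpace X] {K : Type} [NormedAddCommGroup K]
  [InnerProductSpace ℂ K] [CompleteSpace K]

lemma specMeas_inner_eq (G : Set X → (K →L[ℂ] K))
    (hG : ∀ Δ : Set X, MeasurableSet Δ → IsSelfAdjoint (G Δ) ∧ IsIdempotentElem (G Δ))
    {Δ : Set X} (hΔ : MeasurableSet Δ) (k : K) :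
    (inner ℂ (G Δ k) k : ℂ) = ((‖G Δ k‖ ^ 2 : ℝ) : ℂ) := by
  obtain ⟨hsa, hid⟩ := hG Δ hΔ
  have h1 : G Δ (G Δ k) = G Δ k := by
    rw [← ContinuousLinearMap.mul_apply, hid]
  calc (inner ℂ (G Δ k) k : ℂ) = inner ℂ (G Δ (G Δ k)) k := by rw [h1]
    _ = inner ℂ (ContinuousLinearMap.adjoint (G Δ) (G Δ k)) k := by rw [hsa.adjoint_eq]
    _ = inner ℂ (G Δ k) (G Δ k) := ContinuousLinearMap.adjoint_inner_left _ _ _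
    _ = ((‖G Δ k‖ ^ 2 : ℝ) : ℂ) := by
        rw [inner_self_eq_norm_sq_to_K]; norm_cast

lemma exists_nu (G : Set X → (K →L[ℂ] K)) (hG : IsSpectralMeasure G) (k : K) :
    ∃ ν : Measure X, IsScalarMeasureOf ν G k ∧ IsFiniteMeasure ν := by
  obtain ⟨hGp, hGa⟩ := hG
  have hre : ∀ Δ : Set X, MeasurableSet Δ → (inner ℂ (G Δ k) k : ℂ).re = ‖G Δ k‖ ^ 2 := by
    intro Δ hΔ
    rw [specMeas_inner_eq G hGp hΔ k, Complex.ofReal_re]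
  have hempty : G ∅ k = 0 := by
    have h := hGa (fun _ => ∅) (fun _ => MeasurableSet.empty)
      (fun i j _ => by simp [Function.onFun]) k
    rw [Set.iUnion_empty] at h
    exact tendsto_nhds_unique tendsto_const_nhds h.summable.tendsto_atTop_zero
  set ν : Measure X := Measure.ofMeasurable
    (fun Δ _ => ENNReal.ofReal (inner ℂ (G Δ k) k : ℂ).re)
    (by simp [hempty])
    (by
      intro f hf hdisj
      have hs := hGa f hf hdisj k
      have hs2 : HasSum (fun j => ((innerSL ℂ k) (G (f j) k)))
          ((innerSL ℂ k) (G (⋃ j, f j) k)) := hs.mapL _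
      have hs3 : HasSum (fun j => ((innerSL ℂ k) (G (f j) k)).re)
          ((innerSL ℂ k) (G (⋃ j, f j) k)).re := hs2.mapL Complex.reCLM
      have hswap : ∀ x : K, ((innerSL ℂ k) x).re = (inner ℂ x k : ℂ).re := by
        intro x
        rw [innerSL_apply_apply, ← inner_conj_symm (𝕜 := ℂ) x k, Complex.conj_re]
      simp only [hswap] at hs3
      rw [← hs3.tsum_eq, ENNReal.ofReal_tsum_of_nonneg
        (fun j => by rw [hre _ (hf j)]; positivity) hs3.summable]) with hν
  have happ : ∀ Δ : Set X, MeasurableSet Δ →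
      ν Δ = ENNReal.ofReal (inner ℂ (G Δ k) k : ℂ).re := fun Δ hΔ =>
    Measure.ofMeasurable_apply Δ hΔ
  exact ⟨ν, happ, ⟨by rw [happ _ MeasurableSet.univ]; exact ENNReal.ofReal_lt_top⟩⟩

end Aux

set_option maxHeartbeats 1000000 in
set_option synthInstance.maxHeartbeats 400000 in
/-- Let `ρ : C(X, W₁) → W₂` be a unital ⋆-representation (`X` compact
Hausdorff) and for every hermitian projection `P ∈ W₁` let `F_P` be a spectral measure with
regular scalar measures `ν_{P,k}` representing `ρ` on elements `f • P`.  Then the family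
`{F_P}` respects real linear combinations of hermitian projections. -/
theorem statement13 {X : Type} [TopologicalSpace X] [CompactSpace X] [T2Space X]
    [MeasurableSpace X] [BorelSpace X] {H K : Type}
    [NormedAddCommGroup H] [InnerProductSpace ℂ H] [CompleteSpace H]
    [NormedAddCommGroup K] [InnerProductSpace ℂ K] [CompleteSpace K]
    {W₁ : VonNeumannAlgebra H} {W₂ : VonNeumannAlgebra K}
    (ρ : C(X, ↥W₁) →⋆ₐ[ℂ] ↥W₂)
    (F : ↥W₁ → Set X → ↥W₂)
    (hFspec : ∀ P : ↥W₁, IsHermProj P →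
      IsSpectralMeasure (fun Δ => ((F P Δ : K →L[ℂ] K))))
    (hFreg : ∀ P : ↥W₁, IsHermProj P → ∀ k : K, ∀ ν : Measure X,
      IsScalarMeasureOf ν (fun Δ => ((F P Δ : K →L[ℂ] K))) k → ν.Regular)
    (hFrep : ∀ P : ↥W₁, IsHermProj P → ∀ f : C(X, ℝ), (∀ x, 0 ≤ f x) → ∀ k : K,
      ∀ ν : Measure X, IsScalarMeasureOf ν (fun Δ => ((F P Δ : K →L[ℂ] K))) k →
        (inner ℂ ((ρ (cmSmul f P) : K →L[ℂ] K) k) k : ℂ) = ((∫ x, f x ∂ν : ℝ) : ℂ)) :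
    ∀ (n m : ℕ) (lam : Fin n → ℝ) (mu : Fin m → ℝ)
      (P : Fin n → ↥W₁) (Q : Fin m → ↥W₁),
      (∀ i, IsHermProj (P i)) → (∀ j, IsHermProj (Q j)) →
      (∑ i, lam i • ((P i : H →L[ℂ] H))) = (∑ j, mu j • ((Q j : H →L[ℂ] H))) →
      ∀ Δ : Set X, MeasurableSet Δ →
        (∑ i, lam i • ((F (P i) Δ : K →L[ℂ] K))) =
        ∑ j, mu j • ((F (Q j) Δ : K →L[ℂ] K)) := by
  intro n m lam mu P Q hP hQ hsum Δ hΔ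
  have hPinner : ∀ (i : Fin n) (k : K), (inner ℂ ((F (P i) Δ : K →L[ℂ] K) k) k : ℂ)
      = ((‖(F (P i) Δ : K →L[ℂ] K) k‖ ^ 2 : ℝ) : ℂ) :=
    fun i k => specMeas_inner_eq _ (hFspec (P i) (hP i)).1 hΔ k
  have hQinner : ∀ (j : Fin m) (k : K), (inner ℂ ((F (Q j) Δ : K →L[ℂ] K) k) k : ℂ)
      = ((‖(F (Q j) Δ : K →L[ℂ] K) k‖ ^ 2 : ℝ) : ℂ) :=
    fun j k => specMeas_inner_eq _ (hFspec (Q j) (hQ j)).1 hΔ k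
  -- key scalar identity
  have key : ∀ k : K,
      (∑ i, lam i * ‖(F (P i) Δ : K →L[ℂ] K) k‖ ^ 2)
        = ∑ j, mu j * ‖(F (Q j) Δ : K →L[ℂ] K) k‖ ^ 2 := by
    intro k
    choose νP hscalP hfinP using fun i : Fin n => exists_nu _ (hFspec (P i) (hP i)) k
    choose νQ hscalQ hfinQ using fun j : Fin m => exists_nu _ (hFspec (Q j) (hQ j)) k
    have hregP : ∀ i, (νP i).Regular := fun i => hFreg (P i) (hP i) k (νP i) (hscalP i)
    have hregQ : ∀ j, (νQ j).Regular := fun j => hFreg (Q j) (hQ j) k (νQ j) (hscalQ j)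
    -- the integral identity coming from the representation ρ
    have hInt : ∀ f : C(X, ℝ), (∀ x, 0 ≤ f x) →
        (∑ i, lam i * ∫ x, f x ∂(νP i)) = ∑ j, mu j * ∫ x, f x ∂(νQ j) := by
      intro f hf
      have hx : (∑ i, (lam i : ℂ) • P i) = ∑ j, (mu j : ℂ) • Q j := by
        apply Subtype.coe_injective
        push_cast
        simpa [Complex.coe_smul] using hsum
      have harg : (∑ i, (lam i : ℂ) • cmSmul f (P i))
          = ∑ j, (mu j : ℂ) • cmSmul f (Q j) := by
        let L : ↥W₁ →ₗ[ℂ] C(X, ↥W₁) :=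
          { toFun := cmSmul f
            map_add' := fun A B => by
              ext x
              simp [cmSmul, smul_add]
            map_smul' := fun r A => by
              ext x
              simp only [cmSmul, ContinuousMap.coe_mk, RingHom.id_apply,
                ContinuousMap.smul_apply]
              exact smul_comm _ _ _ }
        have hL : ∀ A : ↥W₁, cmSmul f A = L A := fun A => rfl
        simp only [hL, ← _root_.map_smul L, ← map_sum L]
        rw [hx]
      let ρₗ : C(X, ↥W₁) →ₗ[ℂ] ↥W₂ := ρ.toAlgHom.toLinearMap
      have hρfun : ∀ g : C(X, ↥W₁), ρₗ g = ρ g := fun g => rfl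
      have hρeq := congrArg ρₗ harg
      rw [map_sum, map_sum] at hρeq
      simp only [map_smul ρₗ, hρfun] at hρeq
      have h2 := congrArg (fun T : ↥W₂ => (inner ℂ ((T : K →L[ℂ] K) k) k : ℂ)) hρeq
      simp only [AddSubmonoidClass.coe_finset_sum, SetLike.val_smul,
        ContinuousLinearMap.coe_sum', Finset.sum_apply, ContinuousLinearMap.coe_smul',
        Pi.smul_apply, sum_inner, inner_smul_left, Complex.conj_ofReal] at h2
      have hrepP : ∀ i, (inner ℂ ((ρ (cmSmul f (P i)) : K →L[ℂ] K) k) k : ℂ)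
          = ((∫ x, f x ∂(νP i) : ℝ) : ℂ) :=
        fun i => hFrep (P i) (hP i) f hf k (νP i) (hscalP i)
      have hrepQ : ∀ j, (inner ℂ ((ρ (cmSmul f (Q j)) : K →L[ℂ] K) k) k : ℂ)
          = ((∫ x, f x ∂(νQ j) : ℝ) : ℂ) :=
        fun j => hFrep (Q j) (hQ j) f hf k (νQ j) (hscalQ j)
      simp only [hrepP, hrepQ] at h2
      exact_mod_cast h2
    -- shift all coefficients to be nonnegative and compare the two combinations
    set c : ℝ := 1 + (∑ i, |lam i|) + ∑ j, |mu j| with hcdef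
    have hsumabs1 : (0:ℝ) ≤ ∑ i, |lam i| := Finset.sum_nonneg fun i _ => abs_nonneg _
    have hsumabs2 : (0:ℝ) ≤ ∑ j, |mu j| := Finset.sum_nonneg fun j _ => abs_nonneg _
    have hc0 : 0 ≤ c := by rw [hcdef]; linarith
    have hcP : ∀ i, 0 ≤ lam i + c := by
      intro i
      have h1 : |lam i| ≤ ∑ i', |lam i'| :=
        Finset.single_le_sum (f := fun i' => |lam i'|) (fun _ _ => abs_nonneg _)
          (Finset.mem_univ i)
      have h2 := neg_abs_le (lam i)
      rw [hcdef]; linarith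
    have hcQ : ∀ j, 0 ≤ mu j + c := by
      intro j
      have h1 : |mu j| ≤ ∑ j', |mu j'| :=
        Finset.single_le_sum (f := fun j' => |mu j'|) (fun _ _ => abs_nonneg _)
          (Finset.mem_univ j)
      have h2 := neg_abs_le (mu j)
      rw [hcdef]; linarith
    set aa : Fin n ⊕ Fin m → ℝ := Sum.elim (fun i => lam i + c) fun _ => c with haa
    set bb : Fin n ⊕ Fin m → ℝ := Sum.elim (fun _ => c) fun j => mu j + c with hbb
    set meas : Fin n ⊕ Fin m → Measure X := Sum.elim νP νQ with hmeas
    have haa0 : ∀ l, 0 ≤ aa l := by rintro (i | j) <;> simp [haa, hcP, hc0]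
    have hbb0 : ∀ l, 0 ≤ bb l := by rintro (i | j) <;> simp [hbb, hcQ, hc0]
    have hmf : ∀ l, IsFiniteMeasure (meas l) := by rintro (i | j) <;> simp [hmeas, hfinP, hfinQ]
    have hmr : ∀ l, (meas l).Regular := by rintro (i | j) <;> simp [hmeas, hregP, hregQ]
    have hIneq : ∀ f : C(X, ℝ), (∀ x, 0 ≤ f x) →
        (∑ l, aa l * ∫ x, f x ∂(meas l)) = ∑ l, bb l * ∫ x, f x ∂(meas l) := by
      intro f hf
      rw [Fintype.sum_sum_type, Fintype.sum_sum_type]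
      simp only [haa, hbb, hmeas, Sum.elim_inl, Sum.elim_inr]
      have := hInt f hf
      simp only [add_mul, Finset.sum_add_distrib]
      linarith
    have hle1 := combo_le aa bb meas meas haa0 hbb0 hmf hmf hmr hmr
      (fun f hf => le_of_eq (hIneq f hf)) hΔ
    have hle2 := combo_le bb aa meas meas hbb0 haa0 hmf hmf hmr hmr
      (fun f hf => ge_of_eq (hIneq f hf)) hΔ
    have hE := le_antisymm hle1 hle2
    have hvalP : ∀ i, ((νP i) Δ).toReal = ‖(F (P i) Δ : K →L[ℂ] K) k‖ ^ 2 := by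
      intro i
      rw [hscalP i Δ hΔ, hPinner i k, Complex.ofReal_re,
        ENNReal.toReal_ofReal (by positivity)]
    have hvalQ : ∀ j, ((νQ j) Δ).toReal = ‖(F (Q j) Δ : K →L[ℂ] K) k‖ ^ 2 := by
      intro j
      rw [hscalQ j Δ hΔ, hQinner j k, Complex.ofReal_re,
        ENNReal.toReal_ofReal (by positivity)]
    rw [Fintype.sum_sum_type, Fintype.sum_sum_type] at hE
    simp only [haa, hbb, hmeas, Sum.elim_inl, Sum.elim_inr, hvalP, hvalQ] at hE
    simp only [add_mul, Finset.sum_add_distrib] at hE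
    linarith
  -- conclude the operator identity from the scalar one
  have hker : ∀ k : K,
      (inner ℂ (((∑ i, lam i • (F (P i) Δ : K →L[ℂ] K))
        - ∑ j, mu j • (F (Q j) Δ : K →L[ℂ] K)) k) k : ℂ) = 0 := by
    intro k
    simp only [ContinuousLinearMap.sub_apply, ContinuousLinearMap.coe_sum',
      Finset.sum_apply, ContinuousLinearMap.coe_smul', Pi.smul_apply,
      inner_sub_left, sum_inner]
    simp only [← Complex.coe_smul, inner_smul_left, Complex.conj_ofReal]
    simp only [hPinner, hQinner]
    rw [sub_eq_zero]
    exact_mod_cast key k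
  have hzero : ((∑ i, lam i • (F (P i) Δ : K →L[ℂ] K))
      - ∑ j, mu j • (F (Q j) Δ : K →L[ℂ] K)) = 0 := by
    have h0 := (inner_map_self_eq_zero
      (((∑ i, lam i • (F (P i) Δ : K →L[ℂ] K))
        - ∑ j, mu j • (F (Q j) Δ : K →L[ℂ] K) : K →L[ℂ] K) : K →ₗ[ℂ] K)).mp
      (fun x => hker x)
    exact ContinuousLinearMap.coe_injective (by rw [h0]; rfl)
  exact sub_eq_zero.mp hzero
end
end

section
/- Let (X,S) be a measurable space, H and K complex Hilbert spaces, W₁ ⊆ B(H) and W₂ ⊆ B(K) von Neumann algebras, and M : S → B(W₁,W₂) a non-negative measure. Fix Δ ∈ S and suppose there is a constant k_Δ > 0 such that ‖M(Δ)(P)‖ ≤ k_Δ for every hermitian projection P ∈ W₁. Then ‖M(Δ)(A)‖ ≤ ‖A‖·k_Δ for every positive operator A ∈ W₁. -/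
open MeasureTheory Filter Topology ZeroAtInfty ENNReal

noncomputable section

set_option maxHeartbeats 2000000 in
/-- If `M` is a non-negative measure, `Δ` is measurable, and
`‖M(Δ)(P)‖ ≤ k_Δ` for every hermitian projection `P ∈ W₁`, then
`‖M(Δ)(A)‖ ≤ ‖A‖ · k_Δ` for every positive `A ∈ W₁`. -/
theorem statement14 {X : Type} [MeasurableSpace X] {H K : Type}
    [NormedAddCommGroup H] [InnerProductSpace ℂ H] [CompleteSpace H]
    [NormedAddCommGroup K] [InnerProductSpace ℂ K] [CompleteSpace K]
    {W₁ : VonNeumannAlgebra H} {W₂ : VonNeumannAlgebra K}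
    (M : Set X → (↥W₁ →L[ℂ] ↥W₂)) (hM : IsNonnegMeasure M)
    (Δ : Set X) (hΔ : MeasurableSet Δ) (kΔ : ℝ) (hkΔ : 0 < kΔ)
    (hbdd : ∀ P : ↥W₁, IsHermProj P → ‖(M Δ P : K →L[ℂ] K)‖ ≤ kΔ) :
    ∀ A : ↥W₁, (A : H →L[ℂ] H).IsPositive →
      ‖(M Δ A : K →L[ℂ] K)‖ ≤ ‖(A : H →L[ℂ] H)‖ * kΔ := by
  intro A hA
  set n : ℝ := ‖(A : H →L[ℂ] H)‖ with hn
  have hone : IsHermProj (1 : ↥W₁) := by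
    constructor
    · simpa using (isSelfAdjoint_one (H →L[ℂ] H))
    · simpa [IsIdempotentElem] using (IsIdempotentElem.one (M₁ := H →L[ℂ] H))
  -- B := n • 1 - A is positive
  set B : ↥W₁ := (n : ℂ) • 1 - A with hB
  have hBcoe : (B : H →L[ℂ] H) = (n : ℂ) • 1 - (A : H →L[ℂ] H) := by
    simp [hB, AddSubgroupClass.coe_sub, SetLike.val_smul, OneMemClass.coe_one]
  have hApos : (0 : H →L[ℂ] H) ≤ (A : H →L[ℂ] H) :=
    (ContinuousLinearMap.nonneg_iff_isPositive _).2 hA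
  have hAsa : IsSelfAdjoint (A : H →L[ℂ] H) := hA.isSelfAdjoint
  have hle : (A : H →L[ℂ] H) ≤ (n : ℂ) • 1 := by
    have := hAsa.le_algebraMap_norm_self
    simpa [Algebra.algebraMap_eq_smul_one, ← RCLike.real_smul_eq_coe_smul (K := ℂ)] using this
  have hBpos : (B : H →L[ℂ] H).IsPositive := by
    rw [← ContinuousLinearMap.nonneg_iff_isPositive, hBcoe]
    simpa [sub_nonneg] using hle
  -- values
  have hMA : (0 : K →L[ℂ] K) ≤ (M Δ A : K →L[ℂ] K) :=
    (ContinuousLinearMap.nonneg_iff_isPositive _).2 ((hM A hA).1 Δ hΔ)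
  have hMB : (0 : K →L[ℂ] K) ≤ (M Δ B : K →L[ℂ] K) :=
    (ContinuousLinearMap.nonneg_iff_isPositive _).2 ((hM B hBpos).1 Δ hΔ)
  have hMBcoe : (M Δ B : K →L[ℂ] K)
      = (n : ℂ) • (M Δ 1 : K →L[ℂ] K) - (M Δ A : K →L[ℂ] K) := by
    rw [hB, map_sub, _root_.map_smul]
    simp [AddSubgroupClass.coe_sub, SetLike.val_smul]
  have hle2 : (M Δ A : K →L[ℂ] K) ≤ (n : ℂ) • (M Δ 1 : K →L[ℂ] K) := by
    rw [hMBcoe] at hMB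
    exact sub_nonneg.mp hMB
  have hnorm : ‖(M Δ A : K →L[ℂ] K)‖ ≤ ‖(n : ℂ) • (M Δ 1 : K →L[ℂ] K)‖ :=
    CStarAlgebra.norm_le_norm_of_nonneg_of_le hMA hle2
  calc ‖(M Δ A : K →L[ℂ] K)‖ ≤ ‖(n : ℂ) • (M Δ 1 : K →L[ℂ] K)‖ := hnorm
    _ = n * ‖(M Δ 1 : K →L[ℂ] K)‖ := by
        rw [norm_smul, Complex.norm_real, Real.norm_eq_abs, abs_of_nonneg (norm_nonneg _)]
    _ ≤ n * kΔ := by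
        exact mul_le_mul_of_nonneg_left (hbdd 1 hone) (norm_nonneg _)
end
end
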